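/- Let (S, A, δ, s₀) be a blind MDP with target ⊤ ∈ S. Then ⨆ over probability distributions σ on A of ReachProb(P_σ, ⊤, s₀) = 1 if and only if there exists a rank assignment r : A → Option ℕ, with r(a) ≠ none for at least one a ∈ A, such that, defining for each ε ∈ (0,1) the probability distribution σ_ε on A by σ_ε(a) := f(a,ε) / Σ_{a'} f(a',ε), where f(a,ε) := ε^k if r(a) = some k and f(a,ε) := 0 if r(a) = none, we have ReachProb(P_{σ_ε}, ⊤, s₀) → 1 as ε → 0⁺ (along the filter of right-neighborhoods of 0). -/

import Mathlib

open scoped BigOperators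

/-- Iterates whose supremum is the reachability probability. -/
noncomputable def reachAux {S : Type*} [Fintype S] [DecidableEq S]
    (P : S → S → ℝ) (t : S) : ℕ → S → ℝ
  | 0, x => if x = t then 1 else 0
  | n + 1, x => if x = t then 1 else ∑ y, P x y * reachAux P t n y

/-- Reachability probability of target `t` starting from `s` in the Markov chain `P`. -/
noncomputable def ReachProb {S : Type*} [Fintype S] [DecidableEq S]
    (P : S → S → ℝ) (t s : S) : ℝ :=
  ⨆ n : ℕ, reachAux P t n s

/-- The unnormalized weight of action `a` at parameter `ε` for the rank
assignment `r`: `ε ^ k` if `r a = some k`, and `0` if `r a = none`. -/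
noncomputable def rankWeight {A : Type*} (r : A → Option ℕ) (a : A) (ε : ℝ) : ℝ :=
  match r a with
  | some k => ε ^ k
  | none => 0


open Finset
set_option linter.unusedSectionVars false
set_option linter.unusedVariables false
set_option maxHeartbeats 1000000

section MC
variable {S : Type*} [Fintype S] [DecidableEq S] {P : S → S → ℝ} {t : S}

lemma reachAux_nonneg (hP : ∀ x y, 0 ≤ P x y) : ∀ n x, 0 ≤ reachAux P t n x := by
  intro n
  induction n with
  | zero => intro x; simp only [reachAux]; split <;> norm_num
  | succ n ih =>
    intro x; simp only [reachAux]; split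
    · norm_num
    · exact Finset.sum_nonneg fun y _ => mul_nonneg (hP x y) (ih y)

lemma reachAux_le_one (hP : ∀ x y, 0 ≤ P x y) (hrow : ∀ x, ∑ y, P x y ≤ 1) :
    ∀ n x, reachAux P t n x ≤ 1 := by
  intro n
  induction n with
  | zero => intro x; simp only [reachAux]; split <;> norm_num
  | succ n ih =>
    intro x; simp only [reachAux]; split
    · exact le_refl 1
    · calc ∑ y, P x y * reachAux P t n y ≤ ∑ y, P x y * 1 :=
            Finset.sum_le_sum fun y _ => mul_le_mul_of_nonneg_left (ih y) (hP x y)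
        _ ≤ 1 := by simpa using hrow x

lemma reachProb_le_one (hP : ∀ x y, 0 ≤ P x y) (hrow : ∀ x, ∑ y, P x y ≤ 1) (s : S) :
    ReachProb P t s ≤ 1 :=
  ciSup_le fun n => reachAux_le_one hP hrow n s

lemma bddAbove_reachAux (hP : ∀ x y, 0 ≤ P x y) (hrow : ∀ x, ∑ y, P x y ≤ 1) (s : S) :
    BddAbove (Set.range fun n => reachAux P t n s) :=
  ⟨1, by rintro x ⟨n, rfl⟩; exact reachAux_le_one hP hrow n s⟩

lemma reachAux_le_reachProb (hP : ∀ x y, 0 ≤ P x y) (hrow : ∀ x, ∑ y, P x y ≤ 1)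
    (n : ℕ) (s : S) : reachAux P t n s ≤ ReachProb P t s :=
  le_ciSup (bddAbove_reachAux hP hrow s) n

end MC

section Policy
variable {S A : Type*} [Fintype S] [Fintype A] [DecidableEq S]

lemma policyMatrix_nonneg (δ : S → A → S → ℝ)
    (hδ : ∀ s a, (∀ s', 0 ≤ δ s a s') ∧ (∑ s', δ s a s') = 1)
    {σ : A → ℝ} (hσ : ∀ a, 0 ≤ σ a) (s s' : S) :
    0 ≤ ∑ a, σ a * δ s a s' :=
  Finset.sum_nonneg fun a _ => mul_nonneg (hσ a) ((hδ s a).1 s')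

lemma policyMatrix_row (δ : S → A → S → ℝ)
    (hδ : ∀ s a, (∀ s', 0 ≤ δ s a s') ∧ (∑ s', δ s a s') = 1)
    {σ : A → ℝ} (hσ1 : (∑ a, σ a) = 1) (s : S) :
    ∑ s', ∑ a, σ a * δ s a s' = 1 := by
  rw [Finset.sum_comm]
  calc ∑ a, ∑ s', σ a * δ s a s' = ∑ a, σ a * ∑ s', δ s a s' := by
        simp [Finset.mul_sum]
    _ = 1 := by
        simp only [(fun a => (hδ s a).2 : ∀ a, (∑ s', δ s a s') = 1)]
        simpa using hσ1

end Policy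



section RW
variable {A : Type*} [Fintype A]

lemma rankWeight_nonneg (r : A → Option ℕ) (a : A) {ε : ℝ} (hε : 0 ≤ ε) :
    0 ≤ rankWeight r a ε := by
  unfold rankWeight
  rcases r a with _ | k
  · exact le_refl 0
  · exact pow_nonneg hε k

lemma rankWeight_sum_pos (r : A → Option ℕ) {a₀ : A} (ha₀ : r a₀ ≠ none)
    {ε : ℝ} (hε : 0 < ε) : 0 < ∑ a, rankWeight r a ε := by
  have h1 : 0 < rankWeight r a₀ ε := by
    unfold rankWeight
    rcases h : r a₀ with _ | k
    · exact absurd h ha₀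
    · exact pow_pos hε k
  exact Finset.sum_pos' (fun a _ => rankWeight_nonneg r a hε.le)
    ⟨a₀, Finset.mem_univ a₀, h1⟩

lemma rankPolicy_valid (r : A → Option ℕ) {a₀ : A} (ha₀ : r a₀ ≠ none)
    {ε : ℝ} (hε : 0 < ε) :
    (∀ a, 0 ≤ rankWeight r a ε / ∑ a', rankWeight r a' ε) ∧
      (∑ a, rankWeight r a ε / ∑ a', rankWeight r a' ε) = 1 := by
  have hW := rankWeight_sum_pos r ha₀ hε
  refine ⟨fun a => div_nonneg (rankWeight_nonneg r a hε.le) hW.le, ?_⟩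
  rw [← Finset.sum_div, div_self hW.ne']

end RW


section Iter
variable {S : Type*} [DecidableEq S]

/-- `f` fixes everything outside `X`. -/
def normf (X : Finset S) (f : S → S) : Prop := ∀ x, x ∉ X → f x = x

/-- every trajectory of `f` eventually leaves `X`. -/
def acycf (X : Finset S) (f : S → S) : Prop := ∀ x, ∃ n, f^[n] x ∉ X

/-- `y` is reachable from `x` by iterating `f`. -/
def freach (f : S → S) (x y : S) : Prop := ∃ n, f^[n] x = y

lemma freach_refl (f : S → S) (x : S) : freach f x x := ⟨0, rfl⟩

lemma freach_trans {f : S → S} {x y z : S} (h1 : freach f x y) (h2 : freach f y z) :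
    freach f x z := by
  obtain ⟨m, hm⟩ := h1; obtain ⟨n, hn⟩ := h2
  exact ⟨n + m, by rw [Function.iterate_add_apply, hm, hn]⟩

lemma frozen {X : Finset S} {f : S → S} (hf : normf X f) {y : S} (hy : y ∉ X) :
    ∀ n, f^[n] y = y := by
  intro n
  induction n with
  | zero => rfl
  | succ n ih => rw [Function.iterate_succ_apply', ih, hf y hy]

lemma frozen_from {X : Finset S} {f : S → S} (hf : normf X f) {y : S} {m : ℕ}
    (hy : f^[m] y ∉ X) : ∀ p, f^[m + p] y = f^[m] y := by
  intro p
  rw [add_comm, Function.iterate_add_apply]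
  exact frozen hf hy p

lemma no_return {X : Finset S} {f : S → S} (hn : normf X f) (ha : acycf X f)
    {x : S} (hx : x ∈ X) : ¬ freach f (f x) x := by
  rintro ⟨n, hfn⟩
  have hcyc : f^[n + 1] x = x := by
    rw [Function.iterate_succ_apply]; exact hfn
  have hk : ∀ k, f^[k * (n + 1)] x = x := by
    intro k
    induction k with
    | zero => simp
    | succ k ih =>
      rw [Nat.succ_mul, Function.iterate_add_apply, hcyc, ih]
  obtain ⟨m, hm⟩ := ha x
  have h1 : f^[m + ((m + 1) * (n + 1) - m)] x = f^[m] x := frozen_from hn hm _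
  have h2 : m + ((m + 1) * (n + 1) - m) = (m + 1) * (n + 1) := by
    have : m ≤ (m + 1) * (n + 1) := by nlinarith
    omega
  rw [h2, hk (m + 1)] at h1
  exact hm (h1 ▸ hx)

lemma stability {f : S → S} {x y w : S} (h : ∀ n, f^[n] y ≠ x) :
    ∀ n, (Function.update f x w)^[n] y = f^[n] y := by
  intro n
  induction n with
  | zero => rfl
  | succ n ih =>
    rw [Function.iterate_succ_apply', Function.iterate_succ_apply', ih,
      Function.update_of_ne (h n)]

lemma acyc_update {X : Finset S} {f : S → S} (hn : normf X f) (ha : acycf X f)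
    {x y : S} (hx : x ∈ X) (hno : ¬ freach f y x) :
    normf X (Function.update f x y) ∧ acycf X (Function.update f x y) := by
  have hnoy : ∀ n, f^[n] y ≠ x := by
    intro n hc; exact hno ⟨n, hc⟩
  constructor
  · intro z hz
    have hzx : z ≠ x := fun h => hz (h ▸ hx)
    rw [Function.update_of_ne hzx, hn z hz]
  · intro z
    by_cases hzx : ∃ n, f^[n] z = x
    · classical
      set n₀ := Nat.find hzx with hn₀
      have hfind : f^[n₀] z = x := Nat.find_spec hzx
      have hagree : ∀ m, m ≤ n₀ → (Function.update f x y)^[m] z = f^[m] z := by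
        intro m hm
        induction m with
        | zero => rfl
        | succ m ih =>
          have hm' : m ≤ n₀ := Nat.le_of_succ_le hm
          rw [Function.iterate_succ_apply', Function.iterate_succ_apply', ih hm',
            Function.update_of_ne (Nat.find_min hzx (Nat.lt_of_succ_le hm))]
      have h1 : (Function.update f x y)^[n₀] z = x := by rw [hagree n₀ le_rfl, hfind]
      have h2 : (Function.update f x y)^[n₀ + 1] z = y := by
        rw [Function.iterate_succ_apply', h1, Function.update_self]
      obtain ⟨k, hk⟩ := ha y
      refine ⟨k + (n₀ + 1), ?_⟩
      rw [Function.iterate_add_apply, h2, stability hnoy k]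
      exact hk
    · push_neg at hzx
      obtain ⟨k, hk⟩ := ha z
      exact ⟨k, by rw [stability hzx k]; exact hk⟩

lemma freach_target_iff {X : Finset S} {f : S → S} (hn : normf X f)
    {x y t : S} (hx : x ∈ X) (ht : t ∉ X) (hyx : freach f y x) :
    freach f y t ↔ freach f x t := by
  obtain ⟨m, hm⟩ := hyx
  constructor
  · rintro ⟨n, hnn⟩
    rcases le_or_gt m n with h | h
    · refine ⟨n - m, ?_⟩
      rw [← hm, ← Function.iterate_add_apply, Nat.sub_add_cancel h]
      exact hnn
    · exfalso
      have : f^[m] y = f^[(m - n) + n] y := by rw [Nat.sub_add_cancel h.le]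
      rw [Function.iterate_add_apply, hnn] at this
      have hfix : f^[m - n] t = t := frozen hn ht _
      rw [hfix] at this
      rw [hm] at this
      exact ht (this ▸ hx)
  · intro h
    exact freach_trans ⟨m, hm⟩ h

end Iter

section Forest
variable {S A : Type*} [Fintype S] [DecidableEq S] [Fintype A]

open scoped Classical in
/-- The support step relation for action support `B`, avoiding `t`. -/
def relStep (δ : S → A → S → ℝ) (t : S) (B : Finset A) (x y : S) : Prop :=
  x ≠ t ∧ ∃ a ∈ B, 0 < δ x a y

def canReach (δ : S → A → S → ℝ) (t : S) (B : Finset A) (x : S) : Prop :=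
  Relation.ReflTransGen (relStep δ t B) x t

open scoped Classical in
/-- The transient states: those distinct from `t` that can reach `t`. -/
noncomputable def Xset (δ : S → A → S → ℝ) (t : S) (B : Finset A) : Finset S :=
  univ.filter (fun x => x ≠ t ∧ canReach δ t B x)

lemma t_not_mem_Xset (δ : S → A → S → ℝ) (t : S) (B : Finset A) :
    t ∉ Xset δ t B := by
  simp [Xset]

lemma mem_Xset_iff {δ : S → A → S → ℝ} {t : S} {B : Finset A} {x : S} :
    x ∈ Xset δ t B ↔ x ≠ t ∧ canReach δ t B x := by
  simp [Xset]

open scoped Classical in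
/-- Acyclic successor maps (forests) on the transient part. -/
noncomputable def AFin (δ : S → A → S → ℝ) (t : S) (B : Finset A) :
    Finset ((S → S) × (S → A)) :=
  univ.filter (fun i => normf (Xset δ t B) i.1 ∧ acycf (Xset δ t B) i.1)

/-- Weight of a decorated forest. -/
noncomputable def wgt (δ : S → A → S → ℝ) (t : S) (B : Finset A) (σ : A → ℝ)
    (i : (S → S) × (S → A)) : ℝ :=
  ∏ x ∈ Xset δ t B, (σ (i.2 x) * δ x (i.2 x) (i.1 x))

open scoped Classical in
/-- Numerator: decorated forests whose trajectory from `y` ends at `t`. -/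
noncomputable def FtAt (δ : S → A → S → ℝ) (t : S) (B : Finset A) (σ : A → ℝ)
    (y : S) : ℝ :=
  ∑ i ∈ (AFin δ t B).filter (fun i => freach i.1 y t), wgt δ t B σ i

/-- Denominator: all decorated forests. -/
noncomputable def Gp (δ : S → A → S → ℝ) (t : S) (B : Finset A) (σ : A → ℝ) : ℝ :=
  ∑ i ∈ AFin δ t B, wgt δ t B σ i

open scoped Classical in
noncomputable def HAt (δ : S → A → S → ℝ) (t : S) (B : Finset A) (σ : A → ℝ)
    (y : S) : ℝ :=
  ∑ i ∈ (AFin δ t B).filter (fun i => ¬ freach i.1 y t), wgt δ t B σ i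

lemma FtAt_add_HAt (δ : S → A → S → ℝ) (t : S) (B : Finset A) (σ : A → ℝ) (y : S) :
    FtAt δ t B σ y + HAt δ t B σ y = Gp δ t B σ := by
  classical
  rw [FtAt, HAt, Gp, Finset.sum_filter_add_sum_filter_not]

lemma FtAt_t (δ : S → A → S → ℝ) (t : S) (B : Finset A) (σ : A → ℝ) :
    FtAt δ t B σ t = Gp δ t B σ := by
  classical
  rw [FtAt, Gp]
  congr 1
  rw [Finset.filter_eq_self]
  intro i _
  exact ⟨0, rfl⟩

lemma FtAt_notX {δ : S → A → S → ℝ} {t : S} {B : Finset A} (σ : A → ℝ)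
    {y : S} (hy : y ∉ Xset δ t B) (hyt : y ≠ t) :
    FtAt δ t B σ y = 0 := by
  classical
  rw [FtAt]
  convert Finset.sum_empty
  rw [Finset.filter_eq_empty_iff]
  rintro ⟨f, ℓ⟩ hi ⟨n, hn⟩
  simp only [AFin, Finset.mem_filter] at hi
  have := frozen hi.2.1 hy n
  rw [this] at hn
  exact hyt hn
lemma mem_AFin {δ : S → A → S → ℝ} {t : S} {B : Finset A}
    {i : (S → S) × (S → A)} :
    i ∈ AFin δ t B ↔ normf (Xset δ t B) i.1 ∧ acycf (Xset δ t B) i.1 := by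
  simp [AFin]

lemma wgt_update {δ : S → A → S → ℝ} {t : S} {B : Finset A} (σ : A → ℝ)
    {x : S} (hx : x ∈ Xset δ t B) (f : S → S) (ℓ : S → A) (y : S) (a : A) :
    σ a * δ x a y * wgt δ t B σ (f, ℓ)
      = σ (ℓ x) * δ x (ℓ x) (f x)
        * wgt δ t B σ (Function.update f x y, Function.update ℓ x a) := by
  rw [wgt, wgt]
  rw [← Finset.mul_prod_erase _ _ hx, ← Finset.mul_prod_erase _ _ hx]
  have herase : ∀ z ∈ (Xset δ t B).erase x,
      σ ((Function.update ℓ x a) z) * δ z ((Function.update ℓ x a) z)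
        ((Function.update f x y) z)
      = σ (ℓ z) * δ z (ℓ z) (f z) := by
    intro z hz
    have hzx : z ≠ x := Finset.ne_of_mem_erase hz
    rw [Function.update_of_ne hzx, Function.update_of_ne hzx]
  rw [Finset.prod_congr rfl herase]
  simp only [Function.update_self]
  ring

lemma star_identity (δ : S → A → S → ℝ) (t : S) (B : Finset A) (σ : A → ℝ)
    (hσ1 : ∑ a, σ a = 1) (hδrow : ∀ s a, ∑ s', δ s a s' = 1)
    {x : S} (hx : x ∈ Xset δ t B) :
    FtAt δ t B σ x = ∑ y, (∑ a, σ a * δ x a y) * FtAt δ t B σ y := by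
  classical
  have hxt : x ≠ t := (mem_Xset_iff.mp hx).1
  have htX : t ∉ Xset δ t B := t_not_mem_Xset δ t B
  set U : Finset (S × A × ((S → S) × (S → A))) :=
    Finset.univ ×ˢ Finset.univ ×ˢ AFin δ t B with hU
  set g : S × A × ((S → S) × (S → A)) → ℝ :=
    fun p => σ p.2.1 * δ x p.2.1 p.1 * wgt δ t B σ p.2.2 with hg
  have hRHS : ∑ y, (∑ a, σ a * δ x a y) * FtAt δ t B σ y
      = ∑ p ∈ U.filter (fun p => freach p.2.2.1 p.1 t), g p := by
    rw [Finset.sum_filter, hU, Finset.sum_product]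
    refine Finset.sum_congr rfl fun y _ => ?_
    rw [Finset.sum_product, Finset.sum_mul]
    refine Finset.sum_congr rfl fun a _ => ?_
    rw [FtAt, Finset.sum_filter, Finset.mul_sum]
    refine Finset.sum_congr rfl fun i _ => ?_
    by_cases h : freach i.1 y t <;> simp [h, hg, mul_assoc]
  have hLHS : FtAt δ t B σ x
      = ∑ p ∈ U.filter (fun p => freach p.2.2.1 x t), g p := by
    rw [Finset.sum_filter, hU, Finset.sum_product]
    have hstep : ∀ y : S, (∑ p ∈ (Finset.univ : Finset A) ×ˢ AFin δ t B,
        if freach p.2.1 x t then g (y, p) else 0)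
        = (∑ a, σ a * δ x a y) * FtAt δ t B σ x := by
      intro y
      rw [Finset.sum_product, Finset.sum_mul]
      refine Finset.sum_congr rfl fun a _ => ?_
      rw [FtAt, Finset.sum_filter, Finset.mul_sum]
      refine Finset.sum_congr rfl fun i _ => ?_
      by_cases h : freach i.1 x t <;> simp [h, hg, mul_assoc]
    calc FtAt δ t B σ x = (∑ y, ∑ a, σ a * δ x a y) * FtAt δ t B σ x := by
          rw [Finset.sum_comm]
          have : (∑ a, ∑ y, σ a * δ x a y) = 1 := by
            have : ∀ a, (∑ y, σ a * δ x a y) = σ a := by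
              intro a; rw [← Finset.mul_sum, hδrow x a, mul_one]
            rw [Finset.sum_congr rfl fun a _ => this a, hσ1]
          rw [this, one_mul]
      _ = ∑ y, (∑ a, σ a * δ x a y) * FtAt δ t B σ x := by
          rw [Finset.sum_mul]
      _ = ∑ y, ∑ p ∈ (Finset.univ : Finset A) ×ˢ AFin δ t B,
            if freach p.2.1 x t then g (y, p) else 0 := by
          exact Finset.sum_congr rfl fun y _ => (hstep y).symm
  rw [hLHS, hRHS]
  set bad : S × A × ((S → S) × (S → A)) → Prop := fun p => freach p.2.2.1 p.1 x
    with hbad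
  rw [← Finset.sum_filter_add_sum_filter_not
      (U.filter (fun p => freach p.2.2.1 x t)) bad,
    ← Finset.sum_filter_add_sum_filter_not
      (U.filter (fun p => freach p.2.2.1 p.1 t)) bad]
  have hmemU : ∀ p : S × A × ((S → S) × (S → A)), p ∈ U ↔ p.2.2 ∈ AFin δ t B := by
    intro p
    rcases p with ⟨y, a, i⟩
    simp [hU, Finset.mem_product]
  have hbadeq : (U.filter (fun p => freach p.2.2.1 x t)).filter bad
      = (U.filter (fun p => freach p.2.2.1 p.1 t)).filter bad := by
    rw [Finset.filter_filter, Finset.filter_filter]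
    refine Finset.filter_congr ?_
    intro p hp
    rw [hmemU] at hp
    have hn : normf (Xset δ t B) p.2.2.1 := (mem_AFin.mp hp).1
    constructor
    · rintro ⟨h1, h2⟩
      exact ⟨(freach_target_iff hn hx htX h2).mpr h1, h2⟩
    · rintro ⟨h1, h2⟩
      exact ⟨(freach_target_iff hn hx htX h2).mp h1, h2⟩
  rw [hbadeq]
  congr 1
  -- the swap map
  refine Finset.sum_bij'
    (i := fun p _ => (p.2.2.1 x, p.2.2.2 x,
      (Function.update p.2.2.1 x p.1, Function.update p.2.2.2 x p.2.1)))
    (j := fun p _ => (p.2.2.1 x, p.2.2.2 x,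
      (Function.update p.2.2.1 x p.1, Function.update p.2.2.2 x p.2.1)))
    ?_ ?_ ?_ ?_ ?_
  · -- maps source (freach f x t, ¬bad) into target (freach f p.1 t, ¬bad)
    rintro ⟨y₂, a₂, f', ℓ'⟩ hp
    simp only [Finset.mem_filter, hmemU] at hp ⊢
    obtain ⟨⟨hU', hft⟩, hnb⟩ := hp
    have hn := (mem_AFin.mp hU').1
    have ha := (mem_AFin.mp hU').2
    have hnoy : ∀ n, f'^[n] y₂ ≠ x := by
      intro n hc; exact hnb ⟨n, hc⟩
    have hupd := acyc_update hn ha hx (by exact hnb)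
    have hnr : ¬ freach f' (f' x) x := no_return hn ha hx
    have hnrn : ∀ n, f'^[n] (f' x) ≠ x := fun n hc => hnr ⟨n, hc⟩
    have hstab : ∀ n, (Function.update f' x y₂)^[n] (f' x) = f'^[n] (f' x) :=
      stability hnrn
    refine ⟨⟨?_, ?_⟩, ?_⟩
    · exact mem_AFin.mpr ⟨hupd.1, hupd.2⟩
    · -- freach (update f' x y₂) (f' x) t
      obtain ⟨n, hn2⟩ := hft
      cases n with
      | zero => exact absurd hn2 hxt
      | succ m =>
        refine ⟨m, ?_⟩
        rw [hstab m]
        rw [Function.iterate_succ_apply] at hn2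
        exact hn2
    · -- ¬ freach (update f' x y₂) (f' x) x
      rintro ⟨n, hc⟩
      rw [hstab n] at hc
      exact hnr ⟨n, hc⟩
  · -- maps target into source
    rintro ⟨y, a, f, ℓ⟩ hp
    simp only [Finset.mem_filter, hmemU] at hp ⊢
    obtain ⟨⟨hU', hft⟩, hnb⟩ := hp
    have hn := (mem_AFin.mp hU').1
    have ha := (mem_AFin.mp hU').2
    have hnoy : ∀ n, f^[n] y ≠ x := by
      intro n hc; exact hnb ⟨n, hc⟩
    have hupd := acyc_update hn ha hx (by exact hnb)
    have hstab : ∀ n, (Function.update f x y)^[n] y = f^[n] y := stability hnoy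
    have hnr : ¬ freach f (f x) x := no_return hn ha hx
    have hnrn : ∀ n, f^[n] (f x) ≠ x := fun n hc => hnr ⟨n, hc⟩
    have hstab2 : ∀ n, (Function.update f x y)^[n] (f x) = f^[n] (f x) :=
      stability hnrn
    refine ⟨⟨?_, ?_⟩, ?_⟩
    · exact mem_AFin.mpr ⟨hupd.1, hupd.2⟩
    · -- freach (update f x y) x t
      obtain ⟨n, hn2⟩ := hft
      refine ⟨n + 1, ?_⟩
      rw [Function.iterate_succ_apply, Function.update_self, hstab n, hn2]
    · -- ¬ bad : ¬ freach (update f x y) (f x) x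
      rintro ⟨n, hc⟩
      rw [hstab2 n] at hc
      exact hnr ⟨n, hc⟩
  · -- left inverse
    rintro ⟨y₂, a₂, f', ℓ'⟩ hp
    simp only [Function.update_self, Function.update_idem, Function.update_eq_self]
  · -- right inverse
    rintro ⟨y, a, f, ℓ⟩ hp
    simp only [Function.update_self, Function.update_idem, Function.update_eq_self]
  · -- terms agree
    rintro ⟨y₂, a₂, f', ℓ'⟩ hp
    simp only [hg]
    exact wgt_update σ hx f' ℓ' y₂ a₂

end Forest

section Anal
variable {S A : Type*} [Fintype S] [DecidableEq S] [Fintype A]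

noncomputable def Pmat (δ : S → A → S → ℝ) (σ : A → ℝ) : S → S → ℝ :=
  fun x y => ∑ a, σ a * δ x a y

lemma canReach_self (δ : S → A → S → ℝ) (t : S) (B : Finset A) :
    canReach δ t B t := Relation.ReflTransGen.refl

lemma Pmat_eq_zero_step {δ : S → A → S → ℝ} {t : S} {B : Finset A} {σ : A → ℝ}
    (hδ0 : ∀ s a s', 0 ≤ δ s a s') (hσ0 : ∀ a, 0 ≤ σ a)
    (hsupp : ∀ a, a ∉ B → σ a = 0) {x y : S} (hxt : x ≠ t)
    (hnr : ¬ relStep δ t B x y) : Pmat δ σ x y = 0 := by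
  rw [Pmat]
  refine Finset.sum_eq_zero fun a _ => ?_
  by_cases ha : a ∈ B
  · have : ¬ (0 < δ x a y) := fun h => hnr ⟨hxt, a, ha, h⟩
    have : δ x a y = 0 := le_antisymm (not_lt.mp this) (hδ0 x a y)
    rw [this, mul_zero]
  · rw [hsupp a ha, zero_mul]

lemma reachAux_zero_of_doomed {δ : S → A → S → ℝ} {t : S} {B : Finset A}
    {σ : A → ℝ} (hδ0 : ∀ s a s', 0 ≤ δ s a s') (hσ0 : ∀ a, 0 ≤ σ a)
    (hsupp : ∀ a, a ∉ B → σ a = 0) :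
    ∀ n x, ¬ canReach δ t B x → reachAux (Pmat δ σ) t n x = 0 := by
  intro n
  induction n with
  | zero =>
    intro x hx
    have hxt : x ≠ t := fun h => hx (h ▸ canReach_self δ t B)
    simp [reachAux, hxt]
  | succ n ih =>
    intro x hx
    have hxt : x ≠ t := fun h => hx (h ▸ canReach_self δ t B)
    simp only [reachAux, if_neg hxt]
    refine Finset.sum_eq_zero fun y _ => ?_
    by_cases hy : canReach δ t B y
    · have hnr : ¬ relStep δ t B x y := fun hr =>
        hx (Relation.ReflTransGen.head hr hy)
      rw [Pmat_eq_zero_step hδ0 hσ0 hsupp hxt hnr, zero_mul]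
    · rw [ih y hy, mul_zero]

lemma reachAux_at_t {P : S → S → ℝ} {t : S} : ∀ n, reachAux P t n t = 1 := by
  intro n; cases n <;> simp [reachAux]

lemma wgt_nonneg {δ : S → A → S → ℝ} {t : S} {B : Finset A} {σ : A → ℝ}
    (hδ0 : ∀ s a s', 0 ≤ δ s a s') (hσ0 : ∀ a, 0 ≤ σ a)
    (i : (S → S) × (S → A)) : 0 ≤ wgt δ t B σ i :=
  Finset.prod_nonneg fun x _ => mul_nonneg (hσ0 _) (hδ0 _ _ _)

lemma FtAt_nonneg {δ : S → A → S → ℝ} {t : S} {B : Finset A} {σ : A → ℝ}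
    (hδ0 : ∀ s a s', 0 ≤ δ s a s') (hσ0 : ∀ a, 0 ≤ σ a) (y : S) :
    0 ≤ FtAt δ t B σ y :=
  Finset.sum_nonneg fun i _ => wgt_nonneg hδ0 hσ0 i

lemma HAt_nonneg {δ : S → A → S → ℝ} {t : S} {B : Finset A} {σ : A → ℝ}
    (hδ0 : ∀ s a s', 0 ≤ δ s a s') (hσ0 : ∀ a, 0 ≤ σ a) (y : S) :
    0 ≤ HAt δ t B σ y :=
  Finset.sum_nonneg fun i _ => wgt_nonneg hδ0 hσ0 i

lemma FtAt_le_Gp {δ : S → A → S → ℝ} {t : S} {B : Finset A} {σ : A → ℝ}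
    (hδ0 : ∀ s a s', 0 ≤ δ s a s') (hσ0 : ∀ a, 0 ≤ σ a) (y : S) :
    FtAt δ t B σ y ≤ Gp δ t B σ := by
  rw [← FtAt_add_HAt δ t B σ y]
  exact le_add_of_nonneg_right (HAt_nonneg hδ0 hσ0 y)

/-- the candidate value function -/
noncomputable def vfun (δ : S → A → S → ℝ) (t : S) (B : Finset A) (σ : A → ℝ)
    (y : S) : ℝ := FtAt δ t B σ y / Gp δ t B σ

lemma vfun_nonneg {δ : S → A → S → ℝ} {t : S} {B : Finset A} {σ : A → ℝ}
    (hδ0 : ∀ s a s', 0 ≤ δ s a s') (hσ0 : ∀ a, 0 ≤ σ a)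
    (hG : 0 < Gp δ t B σ) (y : S) : 0 ≤ vfun δ t B σ y :=
  div_nonneg (FtAt_nonneg hδ0 hσ0 y) hG.le

lemma vfun_le_one {δ : S → A → S → ℝ} {t : S} {B : Finset A} {σ : A → ℝ}
    (hδ0 : ∀ s a s', 0 ≤ δ s a s') (hσ0 : ∀ a, 0 ≤ σ a)
    (hG : 0 < Gp δ t B σ) (y : S) : vfun δ t B σ y ≤ 1 :=
  (div_le_one hG).mpr (FtAt_le_Gp hδ0 hσ0 y)

lemma vfun_t {δ : S → A → S → ℝ} {t : S} {B : Finset A} {σ : A → ℝ}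
    (hG : 0 < Gp δ t B σ) : vfun δ t B σ t = 1 := by
  rw [vfun, FtAt_t, div_self hG.ne']

lemma vfun_notX {δ : S → A → S → ℝ} {t : S} {B : Finset A} (σ : A → ℝ)
    {y : S} (hy : y ∉ Xset δ t B) (hyt : y ≠ t) : vfun δ t B σ y = 0 := by
  rw [vfun, FtAt_notX σ hy hyt, zero_div]

lemma vfun_harmonic {δ : S → A → S → ℝ} {t : S} {B : Finset A} {σ : A → ℝ}
    (hσ1 : ∑ a, σ a = 1) (hδrow : ∀ s a, ∑ s', δ s a s' = 1)
    {x : S} (hx : x ∈ Xset δ t B) :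
    vfun δ t B σ x = ∑ y, Pmat δ σ x y * vfun δ t B σ y := by
  rw [vfun, star_identity δ t B σ hσ1 hδrow hx, Finset.sum_div]
  exact Finset.sum_congr rfl fun y _ => by rw [Pmat, mul_div_assoc]; rfl

lemma reachAux_le_vfun {δ : S → A → S → ℝ} {t : S} {B : Finset A} {σ : A → ℝ}
    (hδ0 : ∀ s a s', 0 ≤ δ s a s') (hδrow : ∀ s a, ∑ s', δ s a s' = 1)
    (hσ0 : ∀ a, 0 ≤ σ a) (hσ1 : ∑ a, σ a = 1)
    (hsupp : ∀ a, a ∉ B → σ a = 0) (hG : 0 < Gp δ t B σ) :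
    ∀ n x, reachAux (Pmat δ σ) t n x ≤ vfun δ t B σ x := by
  intro n
  induction n with
  | zero =>
    intro x
    simp only [reachAux]
    split
    · rename_i h; rw [h, vfun_t hG]
    · exact vfun_nonneg hδ0 hσ0 hG x
  | succ n ih =>
    intro x
    by_cases hxt : x = t
    · simp only [reachAux, if_pos hxt]
      rw [hxt, vfun_t hG]
    · by_cases hxX : x ∈ Xset δ t B
      · simp only [reachAux, if_neg hxt]
        rw [vfun_harmonic hσ1 hδrow hxX]
        refine Finset.sum_le_sum fun y _ => ?_
        refine mul_le_mul_of_nonneg_left (ih y) ?_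
        exact Finset.sum_nonneg fun a _ => mul_nonneg (hσ0 a) (hδ0 _ _ _)
      · have hcr : ¬ canReach δ t B x := fun h => hxX (mem_Xset_iff.mpr ⟨hxt, h⟩)
        rw [reachAux_zero_of_doomed hδ0 hσ0 hsupp _ x hcr]
        exact vfun_nonneg hδ0 hσ0 hG x
end Anal


section Contract
variable {S A : Type*} [Fintype S] [DecidableEq S] [Fintype A]

noncomputable def Qmat (P : S → S → ℝ) (X : Finset S) : S → S → ℝ :=
  fun x y => if x ∈ X ∧ y ∈ X then P x y else 0

noncomputable def Qpow (P : S → S → ℝ) (X : Finset S) : ℕ → S → S → ℝ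
  | 0 => fun x y => if x = y then 1 else 0
  | n + 1 => fun x y => ∑ z, Qmat P X x z * Qpow P X n z y

noncomputable def rws (P : S → S → ℝ) (X : Finset S) (n : ℕ) (x : S) : ℝ :=
  ∑ y, Qpow P X n x y

variable {P : S → S → ℝ} {X : Finset S}

lemma Qmat_nonneg (hP0 : ∀ x y, 0 ≤ P x y) (x y : S) : 0 ≤ Qmat P X x y := by
  rw [Qmat]; split
  · exact hP0 x y
  · exact le_refl 0

lemma Qmat_le_P (hP0 : ∀ x y, 0 ≤ P x y) (x y : S) : Qmat P X x y ≤ P x y := by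
  rw [Qmat]; split
  · exact le_refl _
  · exact hP0 x y

lemma Qmat_row (hP0 : ∀ x y, 0 ≤ P x y) (hProw : ∀ x, ∑ y, P x y = 1) (x : S) :
    ∑ z, Qmat P X x z ≤ 1 := by
  calc ∑ z, Qmat P X x z ≤ ∑ z, P x z :=
        Finset.sum_le_sum fun z _ => Qmat_le_P hP0 x z
    _ = 1 := hProw x

lemma Qpow_nonneg (hP0 : ∀ x y, 0 ≤ P x y) : ∀ n x y, 0 ≤ Qpow P X n x y := by
  intro n
  induction n with
  | zero => intro x y; simp only [Qpow]; split <;> norm_num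
  | succ n ih =>
    intro x y
    exact Finset.sum_nonneg fun z _ => mul_nonneg (Qmat_nonneg hP0 x z) (ih z y)

lemma rws_zero (x : S) : rws P X 0 x = 1 := by
  rw [rws]
  simp [Qpow]

lemma rws_succ (n : ℕ) (x : S) :
    rws P X (n + 1) x = ∑ z, Qmat P X x z * rws P X n z := by
  rw [rws]
  simp only [Qpow]
  rw [Finset.sum_comm]
  exact Finset.sum_congr rfl fun z _ => by rw [← Finset.mul_sum]; rfl

lemma rws_nonneg (hP0 : ∀ x y, 0 ≤ P x y) (n : ℕ) (x : S) : 0 ≤ rws P X n x :=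
  Finset.sum_nonneg fun y _ => Qpow_nonneg hP0 n x y

lemma rws_le_one (hP0 : ∀ x y, 0 ≤ P x y) (hProw : ∀ x, ∑ y, P x y = 1) :
    ∀ n x, rws P X n x ≤ 1 := by
  intro n
  induction n with
  | zero => intro x; rw [rws_zero]
  | succ n ih =>
    intro x
    rw [rws_succ]
    calc ∑ z, Qmat P X x z * rws P X n z ≤ ∑ z, Qmat P X x z * 1 :=
          Finset.sum_le_sum fun z _ =>
            mul_le_mul_of_nonneg_left (ih z) (Qmat_nonneg hP0 x z)
      _ ≤ 1 := by simpa using Qmat_row hP0 hProw x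

lemma rws_anti (hP0 : ∀ x y, 0 ≤ P x y) (hProw : ∀ x, ∑ y, P x y = 1) :
    ∀ n x, rws P X (n + 1) x ≤ rws P X n x := by
  intro n
  induction n with
  | zero =>
    intro x
    rw [rws_zero, rws_succ]
    calc ∑ z, Qmat P X x z * rws P X 0 z = ∑ z, Qmat P X x z := by
          refine Finset.sum_congr rfl fun z _ => ?_
          rw [rws_zero, mul_one]
      _ ≤ 1 := Qmat_row hP0 hProw x
  | succ n ih =>
    intro x
    rw [rws_succ, rws_succ]
    exact Finset.sum_le_sum fun z _ =>
      mul_le_mul_of_nonneg_left (ih z) (Qmat_nonneg hP0 x z)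

lemma rws_anti_le (hP0 : ∀ x y, 0 ≤ P x y) (hProw : ∀ x, ∑ y, P x y = 1)
    {m n : ℕ} (h : m ≤ n) (x : S) : rws P X n x ≤ rws P X m x := by
  induction n with
  | zero => rw [Nat.le_zero.mp h]
  | succ n ih =>
    rcases Nat.lt_or_ge m (n + 1) with h' | h'
    · exact le_trans (rws_anti hP0 hProw n x) (ih (Nat.lt_succ_iff.mp h'))
    · rw [le_antisymm h h']

lemma Qpow_add (m n : ℕ) (x y : S) :
    Qpow P X (m + n) x y = ∑ z, Qpow P X m x z * Qpow P X n z y := by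
  induction m generalizing x with
  | zero =>
    simp only [Nat.zero_add, Qpow]
    rw [Finset.sum_eq_single x]
    · simp
    · intro z _ hz
      simp [Ne.symm hz]
    · simp
  | succ m ih =>
    have h1 : m + 1 + n = (m + n) + 1 := by omega
    rw [h1]
    simp only [Qpow]
    calc ∑ w, Qmat P X x w * Qpow P X (m + n) w y
        = ∑ w, ∑ z, Qmat P X x w * (Qpow P X m w z * Qpow P X n z y) := by
          refine Finset.sum_congr rfl fun w _ => ?_
          rw [ih, Finset.mul_sum]
      _ = ∑ z, ∑ w, Qmat P X x w * (Qpow P X m w z * Qpow P X n z y) :=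
          Finset.sum_comm
      _ = ∑ z, (∑ w, Qmat P X x w * Qpow P X m w z) * Qpow P X n z y := by
          refine Finset.sum_congr rfl fun z _ => ?_
          rw [Finset.sum_mul]
          exact Finset.sum_congr rfl fun w _ => by ring

lemma Qpow_zero_of_notX (m : ℕ) (hm : 1 ≤ m) {x z : S} (hz : z ∉ X) :
    Qpow P X m x z = 0 := by
  induction m generalizing x with
  | zero => omega
  | succ m ih =>
    simp only [Qpow]
    refine Finset.sum_eq_zero fun w _ => ?_
    rcases Nat.eq_zero_or_pos m with h0 | h1
    · subst h0
      simp only [Qpow]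
      by_cases hwz : w = z
      · subst hwz
        rw [Qmat, if_neg (fun h => hz h.2), zero_mul]
      · rw [if_neg hwz, mul_zero]
    · rw [ih h1, mul_zero]

lemma rws_decomp (m N : ℕ) (x : S) :
    rws P X (m + N) x = ∑ z, Qpow P X m x z * rws P X N z := by
  rw [rws]
  calc ∑ y, Qpow P X (m + N) x y
      = ∑ y, ∑ z, Qpow P X m x z * Qpow P X N z y :=
        Finset.sum_congr rfl fun y _ => Qpow_add m N x y
    _ = ∑ z, ∑ y, Qpow P X m x z * Qpow P X N z y := Finset.sum_comm
    _ = ∑ z, Qpow P X m x z * rws P X N z := by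
        refine Finset.sum_congr rfl fun z _ => ?_
        rw [← Finset.mul_sum]; rfl

lemma rws_add_le (hP0 : ∀ x y, 0 ≤ P x y) {m : ℕ} (hm : 1 ≤ m) (N : ℕ)
    {c : ℝ} (hc0 : 0 ≤ c) (hcX : ∀ z ∈ X, rws P X N z ≤ c) (x : S) :
    rws P X (m + N) x ≤ c * rws P X m x := by
  rw [rws_decomp]
  calc ∑ z, Qpow P X m x z * rws P X N z ≤ ∑ z, Qpow P X m x z * c := by
        refine Finset.sum_le_sum fun z _ => ?_
        by_cases hz : z ∈ X
        · exact mul_le_mul_of_nonneg_left (hcX z hz) (Qpow_nonneg hP0 m x z)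
        · rw [Qpow_zero_of_notX m hm hz, zero_mul, zero_mul]
    _ = c * rws P X m x := by
        rw [← Finset.sum_mul, mul_comm]; rfl

lemma rws_geom (hP0 : ∀ x y, 0 ≤ P x y) (hProw : ∀ x, ∑ y, P x y = 1)
    (N : ℕ) {c : ℝ} (hc0 : 0 ≤ c) (hcX : ∀ z ∈ X, rws P X N z ≤ c) :
    ∀ k x, rws P X (1 + k * N) x ≤ c ^ k := by
  intro k
  induction k with
  | zero =>
    intro x
    simpa using rws_le_one hP0 hProw 1 x
  | succ k ih =>
    intro x
    have h1 : 1 + (k + 1) * N = (1 + k * N) + N := by ring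
    rw [h1, pow_succ]
    calc rws P X ((1 + k * N) + N) x ≤ c * rws P X (1 + k * N) x :=
          rws_add_le hP0 (by omega) N hc0 hcX x
      _ ≤ c * c ^ k := mul_le_mul_of_nonneg_left (ih x) hc0
      _ = c ^ k * c := mul_comm _ _

end Contract


section Decay
variable {S A : Type*} [Fintype S] [DecidableEq S] [Fintype A]
variable {δ : S → A → S → ℝ} {t : S} {B : Finset A} {σ : A → ℝ}

lemma Pmat_nonneg' (hδ0 : ∀ s a s', 0 ≤ δ s a s') (hσ0 : ∀ a, 0 ≤ σ a)
    (x y : S) : 0 ≤ Pmat δ σ x y :=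
  Finset.sum_nonneg fun a _ => mul_nonneg (hσ0 a) (hδ0 _ _ _)

lemma Pmat_row' (hδrow : ∀ s a, ∑ s', δ s a s' = 1) (hσ1 : ∑ a, σ a = 1)
    (x : S) : ∑ y, Pmat δ σ x y = 1 := by
  simp only [Pmat]
  rw [Finset.sum_comm]
  calc ∑ a, ∑ y, σ a * δ x a y = ∑ a, σ a * ∑ y, δ x a y := by
        simp [Finset.mul_sum]
    _ = 1 := by simp [hδrow, hσ1]

lemma Pmat_pos_of_relStep (hδ0 : ∀ s a s', 0 ≤ δ s a s') (hσ0 : ∀ a, 0 ≤ σ a)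
    (hfull : ∀ a ∈ B, 0 < σ a) {x y : S} (h : relStep δ t B x y) :
    0 < Pmat δ σ x y := by
  obtain ⟨hxt, a, ha, hpos⟩ := h
  have h1 : 0 < σ a * δ x a y := mul_pos (hfull a ha) hpos
  have h2 : σ a * δ x a y ≤ ∑ b, σ b * δ x b y :=
    Finset.single_le_sum (f := fun b => σ b * δ x b y)
      (fun b _ => mul_nonneg (hσ0 b) (hδ0 _ _ _)) (Finset.mem_univ a)
  show 0 < ∑ b, σ b * δ x b y
  linarith

lemma exists_decay_at (hδ0 : ∀ s a s', 0 ≤ δ s a s')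
    (hδrow : ∀ s a, ∑ s', δ s a s' = 1) (hσ0 : ∀ a, 0 ≤ σ a)
    (hσ1 : ∑ a, σ a = 1) (hfull : ∀ a ∈ B, 0 < σ a) :
    ∀ y, canReach δ t B y → y ∈ Xset δ t B →
      ∃ p : ℕ × ℝ, 0 < p.2 ∧ p.2 ≤ 1 ∧
        rws (Pmat δ σ) (Xset δ t B) p.1 y ≤ 1 - p.2 := by
  have hP0 := Pmat_nonneg' (σ := σ) hδ0 hσ0
  have hProw := Pmat_row' (σ := σ) hδrow hσ1
  set P' := Pmat δ σ with hP'
  set X' := Xset δ t B with hX'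
  intro y hcan
  refine Relation.ReflTransGen.head_induction_on hcan ?_ ?_
  · intro ht
    exact absurd ht (t_not_mem_Xset δ t B)
  · intro a y' hstep hcan' ih haX
    have hPay : 0 < P' a y' := Pmat_pos_of_relStep hδ0 hσ0 hfull hstep
    have hsplitQ : ∀ n, ∑ z, Qmat P' X' a z * rws P' X' n z
        = Qmat P' X' a y' * rws P' X' n y'
          + ∑ z ∈ Finset.univ.erase y', Qmat P' X' a z * rws P' X' n z :=
      fun n => (Finset.add_sum_erase _ _ (Finset.mem_univ y')).symm
    have herase_le : ∀ n, ∑ z ∈ Finset.univ.erase y', Qmat P' X' a z * rws P' X' n z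
        ≤ (∑ z, Qmat P' X' a z) - Qmat P' X' a y' := by
      intro n
      have h2 : ∑ z ∈ Finset.univ.erase y', Qmat P' X' a z * rws P' X' n z
          ≤ ∑ z ∈ Finset.univ.erase y', Qmat P' X' a z := by
        refine Finset.sum_le_sum fun z _ => ?_
        have h1 := rws_le_one (X := X') hP0 hProw n z
        have h0 := Qmat_nonneg (X := X') hP0 a z
        nlinarith
      have h3 : ∑ z ∈ Finset.univ.erase y', Qmat P' X' a z
          = (∑ z, Qmat P' X' a z) - Qmat P' X' a y' := by
        rw [← Finset.add_sum_erase _ _ (Finset.mem_univ y')]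
        ring
      linarith
    have hQrow : (∑ z, Qmat P' X' a z) ≤ 1 := Qmat_row hP0 hProw a
    by_cases hy'X : y' ∈ X'
    · obtain ⟨⟨n, c⟩, hc, hc1, hr⟩ := ih hy'X
      have hq : Qmat P' X' a y' = P' a y' := by
        rw [Qmat, if_pos ⟨haX, hy'X⟩]
      have hmain : rws P' X' (n + 1) a ≤ 1 - c * P' a y' := by
        rw [rws_succ, hsplitQ n]
        have h1 : Qmat P' X' a y' * rws P' X' n y' ≤ P' a y' * (1 - c) := by
          rw [hq]
          exact mul_le_mul_of_nonneg_left hr hPay.le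
        have h2 := herase_le n
        rw [hq] at h2
        nlinarith
      have hnn := rws_nonneg (X := X') hP0 (n + 1) a
      exact ⟨⟨n + 1, c * P' a y'⟩, mul_pos hc hPay,
        by change c * P' a y' ≤ 1; linarith, hmain⟩
    · have hq : Qmat P' X' a y' = 0 := by
        rw [Qmat, if_neg (fun h => hy'X h.2)]
      have hmain : rws P' X' 1 a ≤ 1 - P' a y' := by
        have h1 : rws P' X' 1 a = ∑ z, Qmat P' X' a z * rws P' X' 0 z :=
          rws_succ 0 a
        rw [h1, hsplitQ 0, hq, zero_mul, zero_add]
        have h2 := herase_le 0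
        rw [hq, sub_zero] at h2
        have h3 : (∑ z, Qmat P' X' a z)
            ≤ (∑ z, P' a z) - P' a y' + Qmat P' X' a y' := by
          rw [hq, add_zero]
          have h4 : ∑ z, Qmat P' X' a z
              = Qmat P' X' a y' + ∑ z ∈ Finset.univ.erase y', Qmat P' X' a z :=
            (Finset.add_sum_erase _ _ (Finset.mem_univ y')).symm
          have h5 : ∑ z ∈ Finset.univ.erase y', Qmat P' X' a z
              ≤ ∑ z ∈ Finset.univ.erase y', P' a z :=
            Finset.sum_le_sum fun z _ => Qmat_le_P hP0 a z
          have h6 : ∑ z ∈ Finset.univ.erase y', P' a z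
              = (∑ z, P' a z) - P' a y' := by
            rw [← Finset.add_sum_erase _ _ (Finset.mem_univ y')]
            ring
          rw [hq, zero_add] at h4
          linarith
        rw [hProw a] at h3
        linarith
      have hnn := rws_nonneg (X := X') hP0 1 a
      exact ⟨⟨1, P' a y'⟩, hPay, by change P' a y' ≤ 1; linarith, hmain⟩

lemma exists_uniform_decay (hδ0 : ∀ s a s', 0 ≤ δ s a s')
    (hδrow : ∀ s a, ∑ s', δ s a s' = 1) (hσ0 : ∀ a, 0 ≤ σ a)
    (hσ1 : ∑ a, σ a = 1) (hfull : ∀ a ∈ B, 0 < σ a)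
    (hXne : (Xset δ t B).Nonempty) :
    ∃ N : ℕ, ∃ c : ℝ, 0 < c ∧ c ≤ 1 ∧
      ∀ x ∈ Xset δ t B, rws (Pmat δ σ) (Xset δ t B) N x ≤ 1 - c := by
  classical
  have hP0 := Pmat_nonneg' (σ := σ) hδ0 hσ0
  have hProw := Pmat_row' (σ := σ) hδrow hσ1
  have key := exists_decay_at (t := t) hδ0 hδrow hσ0 hσ1 hfull
  set pick : S → ℕ × ℝ := fun x =>
    if h : x ∈ Xset δ t B
    then Classical.choose (key x (mem_Xset_iff.mp h).2 h)
    else (0, 1) with hpick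
  have hpickspec : ∀ x ∈ Xset δ t B, 0 < (pick x).2 ∧ (pick x).2 ≤ 1 ∧
      rws (Pmat δ σ) (Xset δ t B) (pick x).1 x ≤ 1 - (pick x).2 := by
    intro x hx
    rw [hpick]
    simp only [dif_pos hx]
    exact Classical.choose_spec (key x (mem_Xset_iff.mp hx).2 hx)
  refine ⟨(Xset δ t B).sup (fun x => (pick x).1),
    (Xset δ t B).inf' hXne (fun x => (pick x).2), ?_, ?_, ?_⟩
  · rw [Finset.lt_inf'_iff]
    intro x hx
    exact (hpickspec x hx).1
  · obtain ⟨x₀, hx₀⟩ := hXne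
    exact le_trans (Finset.inf'_le _ hx₀) (hpickspec x₀ hx₀).2.1
  · intro x hx
    calc rws (Pmat δ σ) (Xset δ t B) ((Xset δ t B).sup (fun x => (pick x).1)) x
        ≤ rws (Pmat δ σ) (Xset δ t B) (pick x).1 x :=
          rws_anti_le hP0 hProw (Finset.le_sup hx) x
      _ ≤ 1 - (pick x).2 := (hpickspec x hx).2.2
      _ ≤ 1 - (Xset δ t B).inf' hXne (fun x => (pick x).2) := by
          have := Finset.inf'_le (fun x => (pick x).2) hx
          linarith

lemma gap_le_rws (hδ0 : ∀ s a s', 0 ≤ δ s a s')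
    (hδrow : ∀ s a, ∑ s', δ s a s' = 1) (hσ0 : ∀ a, 0 ≤ σ a)
    (hσ1 : ∑ a, σ a = 1) (hsupp : ∀ a, a ∉ B → σ a = 0)
    (hG : 0 < Gp δ t B σ) :
    ∀ n, ∀ x ∈ Xset δ t B,
      vfun δ t B σ x - reachAux (Pmat δ σ) t n x
        ≤ rws (Pmat δ σ) (Xset δ t B) n x := by
  have hP0 := Pmat_nonneg' (σ := σ) hδ0 hσ0
  intro n
  induction n with
  | zero =>
    intro x hx
    have hxt : x ≠ t := (mem_Xset_iff.mp hx).1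
    simp only [reachAux, if_neg hxt]
    rw [rws_zero]
    have := vfun_le_one hδ0 hσ0 hG x
    linarith
  | succ n ih =>
    intro x hx
    have hxt : x ≠ t := (mem_Xset_iff.mp hx).1
    simp only [reachAux, if_neg hxt]
    rw [vfun_harmonic hσ1 hδrow hx, rws_succ, ← Finset.sum_sub_distrib]
    refine Finset.sum_le_sum fun y _ => ?_
    rw [← mul_sub]
    by_cases hyX : y ∈ Xset δ t B
    · have hq : Qmat (Pmat δ σ) (Xset δ t B) x y = Pmat δ σ x y := by
        rw [Qmat, if_pos ⟨hx, hyX⟩]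
      rw [hq]
      exact mul_le_mul_of_nonneg_left (ih y hyX) (hP0 x y)
    · have hq : Qmat (Pmat δ σ) (Xset δ t B) x y = 0 := by
        rw [Qmat, if_neg (fun h => hyX h.2)]
      rw [hq, zero_mul]
      refine mul_nonpos_of_nonneg_of_nonpos (hP0 x y) ?_
      by_cases hyt : y = t
      · rw [hyt, vfun_t hG, reachAux_at_t]
        norm_num
      · rw [vfun_notX σ hyX hyt]
        have := reachAux_nonneg (t := t) hP0 n y
        linarith

lemma vfun_le_reachProb (hδ0 : ∀ s a s', 0 ≤ δ s a s')
    (hδrow : ∀ s a, ∑ s', δ s a s' = 1) (hσ0 : ∀ a, 0 ≤ σ a)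
    (hσ1 : ∑ a, σ a = 1) (hsupp : ∀ a, a ∉ B → σ a = 0)
    (hfull : ∀ a ∈ B, 0 < σ a) (hG : 0 < Gp δ t B σ)
    {s : S} (hs : s ∈ Xset δ t B) :
    vfun δ t B σ s ≤ ReachProb (Pmat δ σ) t s := by
  have hP0 := Pmat_nonneg' (σ := σ) hδ0 hσ0
  have hProw := Pmat_row' (σ := σ) hδrow hσ1
  refine le_of_forall_pos_le_add ?_
  intro γ hγ
  obtain ⟨N, c, hc, hc1, hdec⟩ :=
    exists_uniform_decay hδ0 hδrow hσ0 hσ1 hfull ⟨s, hs⟩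
  obtain ⟨k, hk⟩ := exists_pow_lt_of_lt_one hγ (show (1 : ℝ) - c < 1 by linarith)
  have hgeom := rws_geom hP0 hProw N (show (0:ℝ) ≤ 1 - c by linarith) hdec k s
  have hgap := gap_le_rws hδ0 hδrow hσ0 hσ1 hsupp hG (1 + k * N) s hs
  have hle : reachAux (Pmat δ σ) t (1 + k * N) s ≤ ReachProb (Pmat δ σ) t s :=
    reachAux_le_reachProb hP0 (fun x => le_of_eq (hProw x)) _ s
  linarith

theorem reach_eq_ratio (hδ0 : ∀ s a s', 0 ≤ δ s a s')
    (hδrow : ∀ s a, ∑ s', δ s a s' = 1) (hσ0 : ∀ a, 0 ≤ σ a)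
    (hσ1 : ∑ a, σ a = 1) (hsupp : ∀ a, a ∉ B → σ a = 0)
    (hfull : ∀ a ∈ B, 0 < σ a) (hG : 0 < Gp δ t B σ)
    {s : S} (hs : s ∈ Xset δ t B) :
    ReachProb (Pmat δ σ) t s = FtAt δ t B σ s / Gp δ t B σ := by
  refine le_antisymm ?_ ?_
  · exact ciSup_le fun n => reachAux_le_vfun hδ0 hδrow hσ0 hσ1 hsupp hG n s
  · exact vfun_le_reachProb hδ0 hδrow hσ0 hσ1 hsupp hfull hG hs
end Decay


section Witness
variable {S A : Type*} [Fintype S] [DecidableEq S] [Fintype A]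
variable {δ : S → A → S → ℝ} {t : S} {B : Finset A}

/-- states with a step-path to `t` of length at most `n`. -/
def Plen (δ : S → A → S → ℝ) (t : S) (B : Finset A) : ℕ → S → Prop
  | 0 => fun x => x = t
  | n + 1 => fun x => x = t ∨ ∃ y, relStep δ t B x y ∧ Plen δ t B n y

lemma canReach_iff_plen {x : S} :
    canReach δ t B x ↔ ∃ n, Plen δ t B n x := by
  constructor
  · intro h
    induction h using Relation.ReflTransGen.head_induction_on with
    | refl => exact ⟨0, rfl⟩
    | head hstep _ ih =>
      obtain ⟨n, hn⟩ := ih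
      exact ⟨n + 1, Or.inr ⟨_, hstep, hn⟩⟩
  · rintro ⟨n, hn⟩
    induction n generalizing x with
    | zero =>
      rw [show x = t from hn]
      exact Relation.ReflTransGen.refl
    | succ n ih =>
      rcases hn with h | ⟨y, hstep, hy⟩
      · rw [h]
        exact Relation.ReflTransGen.refl
      · exact Relation.ReflTransGen.head hstep (ih hy)

/-- There is an acyclic successor map with positive transitions with labels in `B`. -/
lemma exists_good_forest [Nonempty A] :
    ∃ i : (S → S) × (S → A), i ∈ AFin δ t B ∧
      ∀ x ∈ Xset δ t B, i.2 x ∈ B ∧ 0 < δ x (i.2 x) (i.1 x) := by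
  classical
  set dist : S → ℕ := fun x =>
    if h : canReach δ t B x then Nat.find (canReach_iff_plen.mp h) else 0
    with hdist
  have hdist_spec : ∀ x, canReach δ t B x → Plen δ t B (dist x) x := by
    intro x h
    rw [hdist]
    simp only [dif_pos h]
    exact Nat.find_spec (canReach_iff_plen.mp h)
  have hdist_min : ∀ x (h : canReach δ t B x) m, Plen δ t B m x → dist x ≤ m := by
    intro x h m hm
    rw [hdist]
    simp only [dif_pos h]
    exact Nat.find_le hm
  have hSel : ∀ x, x ∈ Xset δ t B → ∃ p : S × A,
      p.2 ∈ B ∧ 0 < δ x p.2 p.1 ∧ Plen δ t B (dist x - 1) p.1 := by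
    intro x hx
    obtain ⟨hxt, hcr⟩ := mem_Xset_iff.mp hx
    have hd := hdist_spec x hcr
    have hne : dist x ≠ 0 := by
      intro h0
      rw [h0] at hd
      exact hxt hd
    obtain ⟨m, hm⟩ := Nat.exists_eq_succ_of_ne_zero hne
    rw [hm] at hd
    rcases hd with h | ⟨y, hstep, hy⟩
    · exact absurd h hxt
    · obtain ⟨_, a, haB, hpos⟩ := hstep
      refine ⟨(y, a), haB, hpos, ?_⟩
      rw [hm]
      simpa using hy
  set pick : S → S × A := fun x =>
    if h : x ∈ Xset δ t B then Classical.choose (hSel x h)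
    else (x, Classical.arbitrary A) with hpick
  have hpick_spec : ∀ x (h : x ∈ Xset δ t B),
      (pick x).2 ∈ B ∧ 0 < δ x (pick x).2 (pick x).1 ∧
        Plen δ t B (dist x - 1) (pick x).1 := by
    intro x h
    rw [hpick]
    simp only [dif_pos h]
    exact Classical.choose_spec (hSel x h)
  set f : S → S := fun x => (pick x).1 with hf
  set ℓ : S → A := fun x => (pick x).2 with hℓ
  have hnorm : normf (Xset δ t B) f := by
    intro x hx
    rw [hf, hpick]
    simp [dif_neg hx]
  have hkey : ∀ k x, x ∈ Xset δ t B → dist x ≤ k → ∃ n, f^[n] x ∉ Xset δ t B := by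
    intro k
    induction k with
    | zero =>
      intro x hx h0
      obtain ⟨hxt, hcr⟩ := mem_Xset_iff.mp hx
      have := hdist_spec x hcr
      rw [Nat.le_zero.mp h0] at this
      exact absurd this hxt
    | succ k ih =>
      intro x hx hk
      obtain ⟨hxt, hcr⟩ := mem_Xset_iff.mp hx
      have hspec := hpick_spec x hx
      by_cases hyX : f x ∈ Xset δ t B
      · have hycr : canReach δ t B (f x) := (mem_Xset_iff.mp hyX).2
        have hdy : dist (f x) ≤ dist x - 1 := hdist_min _ hycr _ hspec.2.2
        have hne : dist x ≠ 0 := by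
          intro h0
          have := hdist_spec x hcr
          rw [h0] at this
          exact hxt this
        have hdy' : dist (f x) ≤ k := by omega
        obtain ⟨n, hn⟩ := ih (f x) hyX hdy'
        exact ⟨n + 1, by rwa [Function.iterate_succ_apply]⟩
      · exact ⟨1, by simpa using hyX⟩
  have hacyc : acycf (Xset δ t B) f := by
    intro x
    by_cases hx : x ∈ Xset δ t B
    · exact hkey (dist x) x hx le_rfl
    · exact ⟨0, hx⟩
  refine ⟨(f, ℓ), mem_AFin.mpr ⟨hnorm, hacyc⟩, ?_⟩
  intro x hx
  exact ⟨(hpick_spec x hx).1, (hpick_spec x hx).2.1⟩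

lemma Gp_pos [Nonempty A] {σ : A → ℝ}
    (hδ0 : ∀ s a s', 0 ≤ δ s a s') (hσ0 : ∀ a, 0 ≤ σ a)
    (hfull : ∀ a ∈ B, 0 < σ a) : 0 < Gp δ t B σ := by
  classical
  obtain ⟨i, hi, hgood⟩ := exists_good_forest (δ := δ) (t := t) (B := B)
  have hw : 0 < wgt δ t B σ i := by
    rw [wgt]
    refine Finset.prod_pos fun x hx => ?_
    exact mul_pos (hfull _ (hgood x hx).1) (hgood x hx).2
  have hle : wgt δ t B σ i ≤ Gp δ t B σ :=
    Finset.single_le_sum (fun j _ => wgt_nonneg hδ0 hσ0 j) hi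
  linarith
end Witness


section Extraction
variable {S A : Type*} [Fintype S] [DecidableEq S] [Fintype A]
variable {δ : S → A → S → ℝ} {t : S} {B : Finset A}

noncomputable def cdel (δ : S → A → S → ℝ) (t : S) (B : Finset A)
    (i : (S → S) × (S → A)) : ℝ :=
  ∏ x ∈ Xset δ t B, δ x (i.2 x) (i.1 x)

noncomputable def msig (δ : S → A → S → ℝ) (t : S) (B : Finset A) (σ : A → ℝ)
    (i : (S → S) × (S → A)) : ℝ :=
  ∏ x ∈ Xset δ t B, σ (i.2 x)

lemma wgt_split (δ : S → A → S → ℝ) (t : S) (B : Finset A) (σ : A → ℝ)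
    (i : (S → S) × (S → A)) :
    wgt δ t B σ i = msig δ t B σ i * cdel δ t B i := by
  rw [wgt, msig, cdel, ← Finset.prod_mul_distrib]

open scoped Classical in
noncomputable def SGset (δ : S → A → S → ℝ) (t : S) (B : Finset A) :
    Finset ((S → S) × (S → A)) :=
  (AFin δ t B).filter (fun i => 0 < cdel δ t B i ∧ ∀ x ∈ Xset δ t B, i.2 x ∈ B)

open scoped Classical in
noncomputable def SHset (δ : S → A → S → ℝ) (t : S) (B : Finset A) (s₀ : S) :
    Finset ((S → S) × (S → A)) :=
  (SGset δ t B).filter (fun i => ¬ freach i.1 s₀ t)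

lemma mem_SGset {i : (S → S) × (S → A)} :
    i ∈ SGset δ t B ↔ i ∈ AFin δ t B ∧ 0 < cdel δ t B i ∧
      ∀ x ∈ Xset δ t B, i.2 x ∈ B := by
  simp [SGset]

lemma mem_SHset {s₀ : S} {i : (S → S) × (S → A)} :
    i ∈ SHset δ t B s₀ ↔ i ∈ SGset δ t B ∧ ¬ freach i.1 s₀ t := by
  simp [SHset]

lemma wgt_vanish (hδ0 : ∀ s a s', 0 ≤ δ s a s') {σ : A → ℝ}
    (hsupp : ∀ a, a ∉ B → σ a = 0) {i : (S → S) × (S → A)}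
    (hi : ¬ (0 < cdel δ t B i ∧ ∀ x ∈ Xset δ t B, i.2 x ∈ B)) :
    wgt δ t B σ i = 0 := by
  rw [wgt_split]
  push_neg at hi
  by_cases hc : 0 < cdel δ t B i
  · obtain ⟨x, hx, hxB⟩ := hi hc
    rw [msig, Finset.prod_eq_zero hx (hsupp _ hxB), zero_mul]
  · have h0 : 0 ≤ cdel δ t B i := Finset.prod_nonneg fun x _ => hδ0 _ _ _
    rw [le_antisymm (not_lt.mp hc) h0, mul_zero]

lemma Gp_restrict (hδ0 : ∀ s a s', 0 ≤ δ s a s') {σ : A → ℝ}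
    (hsupp : ∀ a, a ∉ B → σ a = 0) :
    Gp δ t B σ = ∑ i ∈ SGset δ t B, wgt δ t B σ i := by
  classical
  rw [Gp]
  refine (Finset.sum_subset (Finset.filter_subset _ _) ?_).symm
  intro i hiA hiS
  refine wgt_vanish hδ0 hsupp ?_
  intro hcond
  exact hiS (mem_SGset.mpr ⟨hiA, hcond⟩)

lemma HAt_restrict (hδ0 : ∀ s a s', 0 ≤ δ s a s') {σ : A → ℝ}
    (hsupp : ∀ a, a ∉ B → σ a = 0) (s₀ : S) :
    HAt δ t B σ s₀ = ∑ i ∈ SHset δ t B s₀, wgt δ t B σ i := by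
  classical
  rw [HAt]
  refine (Finset.sum_subset ?_ ?_).symm
  · intro i hi
    obtain ⟨hiG, hif⟩ := mem_SHset.mp hi
    rw [Finset.mem_filter]
    exact ⟨Finset.mem_of_mem_filter i hiG, hif⟩
  · intro i hi hiS
    rw [Finset.mem_filter] at hi
    refine wgt_vanish hδ0 hsupp ?_
    intro hcond
    exact hiS (mem_SHset.mpr ⟨mem_SGset.mpr ⟨hi.1, hcond⟩, hi.2⟩)

/-- exponent of a forest with respect to a real vector -/
noncomputable def Eu (δ : S → A → S → ℝ) (t : S) (B : Finset A) (u : A → ℝ)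
    (i : (S → S) × (S → A)) : ℝ :=
  ∑ x ∈ Xset δ t B, u (i.2 x)

/-- natural-number exponent of a forest with respect to a rank vector -/
noncomputable def NL (δ : S → A → S → ℝ) (t : S) (B : Finset A) (L : A → ℕ)
    (i : (S → S) × (S → A)) : ℕ :=
  ∑ x ∈ Xset δ t B, L (i.2 x)

open scoped Classical in
lemma msig_eq_exp {σ : A → ℝ} (hfull : ∀ a ∈ B, 0 < σ a)
    {i : (S → S) × (S → A)} (hi : ∀ x ∈ Xset δ t B, i.2 x ∈ B) :
    msig δ t B σ i
      = Real.exp (-(Eu δ t B (fun a => if a ∈ B then -Real.log (σ a) else 0) i)) := by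
  rw [msig, Eu, ← Finset.sum_neg_distrib, Real.exp_sum]
  refine Finset.prod_congr rfl fun x hx => ?_
  rw [if_pos (hi x hx), neg_neg, Real.exp_log (hfull _ (hi x hx))]
end Extraction


section RankExtract
variable {S A : Type*} [Fintype S] [DecidableEq S] [Fintype A]
variable {δ : S → A → S → ℝ} {t : S} {B : Finset A}

open scoped Classical in
lemma exists_rank_of_small_H {σ : A → ℝ}
    (hδ0 : ∀ s a s', 0 ≤ δ s a s') (hσ0 : ∀ a, 0 ≤ σ a) (hσ1 : ∑ a, σ a = 1)
    (hsupp : ∀ a, a ∉ B → σ a = 0) (hfull : ∀ a ∈ B, 0 < σ a)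
    {s₀ : S} (hSHne : (SHset δ t B s₀).Nonempty)
    (hSGne : (SGset δ t B).Nonempty)
    (hlt : HAt δ t B σ s₀ *
        ((SGset δ t B).card * (SGset δ t B).sup' hSGne (cdel δ t B) * Real.exp 1)
      < (SHset δ t B s₀).inf' hSHne (cdel δ t B) * Gp δ t B σ) :
    ∃ L : A → ℕ, ∃ j₀ ∈ SGset δ t B,
      ∀ i ∈ SHset δ t B s₀, NL δ t B L j₀ < NL δ t B L i := by
  classical
  set u : A → ℝ := fun a => if a ∈ B then -Real.log (σ a) else 0 with hu
  have hu0 : ∀ a, 0 ≤ u a := by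
    intro a
    rw [hu]
    by_cases ha : a ∈ B
    · simp only [if_pos ha]
      have hle1 : σ a ≤ 1 := by
        rw [← hσ1]
        exact Finset.single_le_sum (fun b _ => hσ0 b) (Finset.mem_univ a)
      have := Real.log_nonpos (hσ0 a) hle1
      linarith
    · simp [if_neg ha]
  set cmin := (SHset δ t B s₀).inf' hSHne (cdel δ t B) with hcmin
  set cmax := (SGset δ t B).sup' hSGne (cdel δ t B) with hcmax
  have hcdel_pos : ∀ i ∈ SGset δ t B, 0 < cdel δ t B i :=
    fun i hi => (mem_SGset.mp hi).2.1
  have hcmin_pos : 0 < cmin := by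
    rw [hcmin, Finset.lt_inf'_iff]
    intro i hi
    exact hcdel_pos i (mem_SHset.mp hi).1
  have hcmax_pos : 0 < cmax := by
    obtain ⟨j, hj⟩ := hSGne
    exact lt_of_lt_of_le (hcdel_pos j hj) (Finset.le_sup' _ hj)
  have hcard_pos : (0:ℝ) < (SGset δ t B).card := by
    exact_mod_cast Finset.card_pos.mpr hSGne
  set mH := (SHset δ t B s₀).inf' hSHne (Eu δ t B u) with hmH
  set mG := (SGset δ t B).inf' hSGne (Eu δ t B u) with hmG
  have hlabels : ∀ i ∈ SGset δ t B, ∀ x ∈ Xset δ t B, i.2 x ∈ B :=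
    fun i hi => (mem_SGset.mp hi).2.2
  -- lower bound on H
  have hHlow : cmin * Real.exp (-mH) ≤ HAt δ t B σ s₀ := by
    obtain ⟨i₀, hi₀, hEi₀⟩ := Finset.exists_mem_eq_inf' hSHne (Eu δ t B u)
    have h1 : wgt δ t B σ i₀ ≤ HAt δ t B σ s₀ := by
      rw [HAt_restrict hδ0 hsupp s₀]
      exact Finset.single_le_sum (fun j _ => wgt_nonneg hδ0 hσ0 j) hi₀
    have h2 : wgt δ t B σ i₀ = Real.exp (-(Eu δ t B u i₀)) * cdel δ t B i₀ := by
      rw [wgt_split, msig_eq_exp hfull (hlabels i₀ (mem_SHset.mp hi₀).1)]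
    have h3 : cmin ≤ cdel δ t B i₀ := Finset.inf'_le _ hi₀
    have h4 : Real.exp (-mH) = Real.exp (-(Eu δ t B u i₀)) := by rw [hmH, hEi₀]
    nlinarith [Real.exp_pos (-(Eu δ t B u i₀))]
  -- upper bound on G
  have hGup : Gp δ t B σ ≤ (SGset δ t B).card * cmax * Real.exp (-mG) := by
    rw [Gp_restrict hδ0 hsupp]
    have hbound : ∀ i ∈ SGset δ t B,
        wgt δ t B σ i ≤ cmax * Real.exp (-mG) := by
      intro i hi
      rw [wgt_split, msig_eq_exp hfull (hlabels i hi)]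
      have h1 : Real.exp (-(Eu δ t B u i)) ≤ Real.exp (-mG) := by
        rw [Real.exp_le_exp]
        have := Finset.inf'_le (Eu δ t B u) hi
        rw [← hmG] at this
        linarith
      have h2 : cdel δ t B i ≤ cmax := Finset.le_sup' _ hi
      nlinarith [Real.exp_pos (-(Eu δ t B u i)), (hcdel_pos i hi).le]
    calc ∑ i ∈ SGset δ t B, wgt δ t B σ i
        ≤ (SGset δ t B).card * (cmax * Real.exp (-mG)) := by
          have := Finset.sum_le_card_nsmul (SGset δ t B) (wgt δ t B σ)
            (cmax * Real.exp (-mG)) hbound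
          simpa [nsmul_eq_mul] using this
      _ = (SGset δ t B).card * cmax * Real.exp (-mG) := by ring
  -- derive the exponent gap
  have hgap : mG + 1 < mH := by
    have hT : (0:ℝ) < (SGset δ t B).card * cmax * Real.exp 1 := by
      positivity
    have h5 : cmin * Real.exp (-mH) * ((SGset δ t B).card * cmax * Real.exp 1)
        < cmin * ((SGset δ t B).card * cmax * Real.exp (-mG)) := by
      calc cmin * Real.exp (-mH) * ((SGset δ t B).card * cmax * Real.exp 1)
          ≤ HAt δ t B σ s₀ * ((SGset δ t B).card * cmax * Real.exp 1) := by
            exact mul_le_mul_of_nonneg_right hHlow hT.le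
        _ < cmin * Gp δ t B σ := hlt
        _ ≤ cmin * ((SGset δ t B).card * cmax * Real.exp (-mG)) := by
            exact mul_le_mul_of_nonneg_left hGup hcmin_pos.le
    have h6 : Real.exp (-mH) * ((SGset δ t B).card * cmax * Real.exp 1)
        < (SGset δ t B).card * cmax * Real.exp (-mG) := by
      have e1 : cmin * Real.exp (-mH) * ((SGset δ t B).card * cmax * Real.exp 1)
          = cmin * (Real.exp (-mH) * ((SGset δ t B).card * cmax * Real.exp 1)) := by
        ring
      have h5' : cmin * (Real.exp (-mH) * ((SGset δ t B).card * cmax * Real.exp 1))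
          < cmin * ((SGset δ t B).card * cmax * Real.exp (-mG)) := by
        linarith
      exact lt_of_mul_lt_mul_left h5' hcmin_pos.le
    have h7 : Real.exp (-mH) * Real.exp 1 < Real.exp (-mG) := by
      have e2 : Real.exp (-mH) * ((SGset δ t B).card * cmax * Real.exp 1)
          = ((SGset δ t B).card * cmax) * (Real.exp (-mH) * Real.exp 1) := by
        ring
      have e3 : (SGset δ t B).card * cmax * Real.exp (-mG)
          = ((SGset δ t B).card * cmax) * Real.exp (-mG) := by ring
      have h6' : ((SGset δ t B).card * cmax) * (Real.exp (-mH) * Real.exp 1)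
          < ((SGset δ t B).card * cmax) * Real.exp (-mG) := by linarith
      exact lt_of_mul_lt_mul_left h6' (by positivity)
    rw [← Real.exp_add, Real.exp_lt_exp] at h7
    linarith
  -- build the integer rank vector
  set M := (Xset δ t B).card with hM
  set L : A → ℕ := fun a => ⌈((2 * M + 1 : ℕ) : ℝ) * u a⌉₊ with hL
  have hEu_lb : ∀ i, ((2 * M + 1 : ℕ) : ℝ) * Eu δ t B u i
      ≤ Eu δ t B (fun a => (L a : ℝ)) i := by
    intro i
    rw [Eu, Eu, Finset.mul_sum]
    exact Finset.sum_le_sum fun x _ => Nat.le_ceil _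
  have hEu_ub : ∀ i, Eu δ t B (fun a => (L a : ℝ)) i
      ≤ ((2 * M + 1 : ℕ) : ℝ) * Eu δ t B u i + M := by
    intro i
    rw [Eu, Eu, Finset.mul_sum]
    calc ∑ x ∈ Xset δ t B, ((L (i.2 x) : ℝ))
        ≤ ∑ x ∈ Xset δ t B, (((2 * M + 1 : ℕ) : ℝ) * u (i.2 x) + 1) := by
          refine Finset.sum_le_sum fun x _ => ?_
          have := Nat.ceil_lt_add_one
            (a := ((2 * M + 1 : ℕ) : ℝ) * u (i.2 x))
            (mul_nonneg (by positivity) (hu0 (i.2 x)))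
          exact le_of_lt this
      _ = (∑ x ∈ Xset δ t B, ((2 * M + 1 : ℕ) : ℝ) * u (i.2 x)) + M := by
          rw [Finset.sum_add_distrib, Finset.sum_const, hM]
          simp [nsmul_eq_mul]
  have hNL_cast : ∀ i, ((NL δ t B L i : ℕ) : ℝ) = Eu δ t B (fun a => (L a : ℝ)) i := by
    intro i
    rw [NL, Eu]
    push_cast
    rfl
  obtain ⟨j₀, hj₀, hEj₀⟩ := Finset.exists_mem_eq_inf' hSGne (Eu δ t B u)
  refine ⟨L, j₀, hj₀, ?_⟩
  intro i hi
  have hi_lb : mH ≤ Eu δ t B u i := Finset.inf'_le _ hi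
  have hMpos : (0:ℝ) ≤ ((2 * M + 1 : ℕ) : ℝ) := by positivity
  have h1 : ((NL δ t B L i : ℕ) : ℝ) ≥ ((2 * M + 1 : ℕ) : ℝ) * mH := by
    rw [hNL_cast]
    calc ((2 * M + 1 : ℕ) : ℝ) * mH ≤ ((2 * M + 1 : ℕ) : ℝ) * Eu δ t B u i :=
          mul_le_mul_of_nonneg_left hi_lb hMpos
      _ ≤ _ := hEu_lb i
  have h2 : ((NL δ t B L j₀ : ℕ) : ℝ)
      ≤ ((2 * M + 1 : ℕ) : ℝ) * mG + M := by
    rw [hNL_cast]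
    calc Eu δ t B (fun a => (L a : ℝ)) j₀
        ≤ ((2 * M + 1 : ℕ) : ℝ) * Eu δ t B u j₀ + M := hEu_ub j₀
      _ = ((2 * M + 1 : ℕ) : ℝ) * mG + M := by rw [hmG, ← hEj₀]
  have hfinal : ((NL δ t B L j₀ : ℕ) : ℝ) < ((NL δ t B L i : ℕ) : ℝ) := by
    have hcast : ((2 * M + 1 : ℕ) : ℝ) = 2 * (M:ℝ) + 1 := by push_cast; ring
    rw [hcast] at h1 h2
    nlinarith [hu0, (show (0:ℝ) ≤ M by positivity)]
  exact_mod_cast hfinal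
end RankExtract


section Curve
variable {S A : Type*} [Fintype S] [DecidableEq S] [Fintype A]
variable {δ : S → A → S → ℝ} {t : S} {B : Finset A}

open scoped Classical in
lemma rankWeight_eq {L : A → ℕ} {a : A} {ε : ℝ} :
    rankWeight (fun a => if a ∈ B then some (L a) else none) a ε
      = if a ∈ B then ε ^ L a else 0 := by
  by_cases ha : a ∈ B <;> simp [rankWeight, ha]

open scoped Classical in
lemma tendsto_rank_curve [Nonempty A]
    (hδ : ∀ s a, (∀ s', 0 ≤ δ s a s') ∧ (∑ s', δ s a s') = 1)
    {s₀ : S} (hs₀ : s₀ ∈ Xset δ t B) {b₀ : A} (hb₀ : b₀ ∈ B)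
    (L : A → ℕ) {j₀ : (S → S) × (S → A)} (hj₀ : j₀ ∈ SGset δ t B)
    (hstrict : ∀ i ∈ SHset δ t B s₀, NL δ t B L j₀ < NL δ t B L i) :
    Filter.Tendsto (fun ε : ℝ => ReachProb (Pmat δ (fun a =>
        rankWeight (fun a' => if a' ∈ B then some (L a') else none) a ε
          / ∑ a', rankWeight (fun a'' => if a'' ∈ B then some (L a'') else none) a' ε))
        t s₀)
      (nhdsWithin 0 (Set.Ioi 0)) (nhds 1) := by
  classical
  have hδ0 : ∀ s a s', 0 ≤ δ s a s' := fun s a => (hδ s a).1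
  have hδrow : ∀ s a, ∑ s', δ s a s' = 1 := fun s a => (hδ s a).2
  set r : A → Option ℕ := fun a => if a ∈ B then some (L a) else none with hr
  set K : ℝ := (∑ i ∈ SHset δ t B s₀, cdel δ t B i) / cdel δ t B j₀ with hK
  have hcj₀ : 0 < cdel δ t B j₀ := (mem_SGset.mp hj₀).2.1
  have hK0 : 0 ≤ K := by
    rw [hK]
    refine div_nonneg ?_ hcj₀.le
    exact Finset.sum_nonneg fun i _ =>
      Finset.prod_nonneg fun x _ => hδ0 _ _ _
  -- the main estimate on (0,1)
  have key : ∀ ε ∈ Set.Ioo (0:ℝ) 1,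
      1 - K * ε ≤ ReachProb (Pmat δ (fun a =>
        rankWeight r a ε / ∑ a', rankWeight r a' ε)) t s₀
      ∧ ReachProb (Pmat δ (fun a =>
        rankWeight r a ε / ∑ a', rankWeight r a' ε)) t s₀ ≤ 1 := by
    intro ε hε
    obtain ⟨hε0, hε1⟩ := hε
    have hb₀r : r b₀ ≠ none := by rw [hr]; simp [hb₀]
    obtain ⟨hσ0, hσ1⟩ := rankPolicy_valid r hb₀r hε0
    set σ : A → ℝ := fun a => rankWeight r a ε / ∑ a', rankWeight r a' ε with hσ
    have hW : 0 < ∑ a', rankWeight r a' ε := rankWeight_sum_pos r hb₀r hε0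
    have hsupp : ∀ a, a ∉ B → σ a = 0 := by
      intro a ha
      rw [hσ]
      simp only [hr, rankWeight_eq (L := L), if_neg ha, zero_div]
    have hfull : ∀ a ∈ B, 0 < σ a := by
      intro a ha
      rw [hσ]
      simp only [hr]
      rw [rankWeight_eq (L := L), if_pos ha]
      exact div_pos (pow_pos hε0 _) hW
    have hG : 0 < Gp δ t B σ := Gp_pos hδ0 hσ0 hfull
    have hrep : ReachProb (Pmat δ σ) t s₀ = FtAt δ t B σ s₀ / Gp δ t B σ :=
      reach_eq_ratio hδ0 hδrow hσ0 hσ1 hsupp hfull hG hs₀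
    have hone : ReachProb (Pmat δ σ) t s₀
        = 1 - HAt δ t B σ s₀ / Gp δ t B σ := by
      rw [hrep, eq_sub_iff_add_eq, ← add_div, FtAt_add_HAt, div_self hG.ne']
    -- monomial values
    set M := (Xset δ t B).card with hM
    set W := ∑ a', rankWeight r a' ε with hWdef
    have hmsig : ∀ i ∈ SGset δ t B,
        msig δ t B σ i = ε ^ (NL δ t B L i) / W ^ M := by
      intro i hi
      have hlab := (mem_SGset.mp hi).2.2
      rw [msig]
      have : ∀ x ∈ Xset δ t B, σ (i.2 x) = ε ^ (L (i.2 x)) / W := by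
        intro x hx
        rw [hσ]
        simp only [hr]
        rw [rankWeight_eq (L := L), if_pos (hlab x hx)]
      rw [Finset.prod_congr rfl this, Finset.prod_div_distrib,
        Finset.prod_const, Finset.prod_pow_eq_pow_sum]
      rfl
    have hWpow : 0 < W ^ M := pow_pos hW M
    -- numerator bound
    have hHbound : HAt δ t B σ s₀
        ≤ (∑ i ∈ SHset δ t B s₀, cdel δ t B i) * (ε ^ (NL δ t B L j₀ + 1) / W ^ M) := by
      rw [HAt_restrict hδ0 hsupp s₀]
      have hterm : ∀ i ∈ SHset δ t B s₀,
          wgt δ t B σ i ≤ cdel δ t B i * (ε ^ (NL δ t B L j₀ + 1) / W ^ M) := by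
        intro i hi
        rw [wgt_split, hmsig i (mem_SHset.mp hi).1]
        have hcd : 0 ≤ cdel δ t B i :=
          Finset.prod_nonneg fun x _ => hδ0 _ _ _
        have hpow : ε ^ (NL δ t B L i) ≤ ε ^ (NL δ t B L j₀ + 1) :=
          pow_le_pow_of_le_one hε0.le hε1.le (hstrict i hi)
        have : ε ^ (NL δ t B L i) / W ^ M ≤ ε ^ (NL δ t B L j₀ + 1) / W ^ M :=
          (div_le_div_iff_of_pos_right hWpow).mpr hpow
        calc ε ^ (NL δ t B L i) / W ^ M * cdel δ t B i
            ≤ ε ^ (NL δ t B L j₀ + 1) / W ^ M * cdel δ t B i :=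
              mul_le_mul_of_nonneg_right this hcd
          _ = cdel δ t B i * (ε ^ (NL δ t B L j₀ + 1) / W ^ M) := by ring
      calc ∑ i ∈ SHset δ t B s₀, wgt δ t B σ i
          ≤ ∑ i ∈ SHset δ t B s₀, cdel δ t B i * (ε ^ (NL δ t B L j₀ + 1) / W ^ M) :=
            Finset.sum_le_sum hterm
        _ = (∑ i ∈ SHset δ t B s₀, cdel δ t B i) * (ε ^ (NL δ t B L j₀ + 1) / W ^ M) := by
            rw [Finset.sum_mul]
    -- denominator bound
    have hGbound : cdel δ t B j₀ * (ε ^ (NL δ t B L j₀) / W ^ M) ≤ Gp δ t B σ := by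
      rw [Gp_restrict hδ0 hsupp]
      have : wgt δ t B σ j₀ = cdel δ t B j₀ * (ε ^ (NL δ t B L j₀) / W ^ M) := by
        rw [wgt_split, hmsig j₀ hj₀]
        ring
      rw [← this]
      exact Finset.single_le_sum (fun i _ => wgt_nonneg hδ0 hσ0 i) hj₀
    have hgpos : 0 < cdel δ t B j₀ * (ε ^ (NL δ t B L j₀) / W ^ M) :=
      mul_pos hcj₀ (div_pos (pow_pos hε0 _) hWpow)
    have hratio : HAt δ t B σ s₀ / Gp δ t B σ ≤ K * ε := by
      have hH0 : 0 ≤ HAt δ t B σ s₀ := HAt_nonneg hδ0 hσ0 s₀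
      calc HAt δ t B σ s₀ / Gp δ t B σ
          ≤ HAt δ t B σ s₀ / (cdel δ t B j₀ * (ε ^ (NL δ t B L j₀) / W ^ M)) :=
            div_le_div_of_nonneg_left hH0 hgpos hGbound
        _ ≤ ((∑ i ∈ SHset δ t B s₀, cdel δ t B i) * (ε ^ (NL δ t B L j₀ + 1) / W ^ M))
              / (cdel δ t B j₀ * (ε ^ (NL δ t B L j₀) / W ^ M)) := by
            exact (div_le_div_iff_of_pos_right hgpos).mpr hHbound
        _ = K * ε := by
            rw [hK, pow_succ]
            field_simp
    have hρ0 : 0 ≤ HAt δ t B σ s₀ / Gp δ t B σ :=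
      div_nonneg (HAt_nonneg hδ0 hσ0 s₀) hG.le
    constructor
    · rw [hone]; linarith
    · rw [hone]; linarith
  -- squeeze
  have hmem : Set.Ioo (0:ℝ) 1 ∈ nhdsWithin (0:ℝ) (Set.Ioi 0) :=
    Ioo_mem_nhdsGT_of_mem (by simp [zero_lt_one])
  have hlower : ∀ᶠ ε in nhdsWithin (0:ℝ) (Set.Ioi 0),
      1 - K * ε ≤ ReachProb (Pmat δ (fun a =>
        rankWeight r a ε / ∑ a', rankWeight r a' ε)) t s₀ :=
    Filter.eventually_of_mem hmem fun ε hε => (key ε hε).1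
  have hupper : ∀ᶠ ε in nhdsWithin (0:ℝ) (Set.Ioi 0),
      ReachProb (Pmat δ (fun a =>
        rankWeight r a ε / ∑ a', rankWeight r a' ε)) t s₀ ≤ 1 :=
    Filter.eventually_of_mem hmem fun ε hε => (key ε hε).2
  have htend : Filter.Tendsto (fun ε : ℝ => 1 - K * ε)
      (nhdsWithin (0:ℝ) (Set.Ioi 0)) (nhds 1) := by
    have h1 : Filter.Tendsto (fun ε : ℝ => 1 - K * ε) (nhds 0) (nhds 1) := by
      have hc : Continuous (fun ε : ℝ => 1 - K * ε) := by
        continuity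
      have := hc.tendsto (0:ℝ)
      simpa using this
    exact h1.mono_left nhdsWithin_le_nhds
  exact tendsto_of_tendsto_of_tendsto_of_le_of_le' htend tendsto_const_nhds
    hlower hupper
end Curve



/-- A blind MDP is limit-sure winning under memoryless policies iff it admits a
rank policy witness: a rank assignment `r : A → Option ℕ` (not everywhere `none`)
such that the normalized policies `σ_ε(a) = ε^{r a} / Σ_{a'} ε^{r a'}` have
reachability probability tending to `1` as `ε → 0⁺`. -/
theorem limitSure_iff_rank_witness {S A : Type*} [Fintype S] [Fintype A]
    [DecidableEq S] [Nonempty S] [Nonempty A]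
    (δ : S → A → S → ℝ)
    (hδ : ∀ s a, (∀ s', 0 ≤ δ s a s') ∧ (∑ s', δ s a s') = 1)
    (s₀ top : S) :
    sSup {x : ℝ | ∃ σ : A → ℝ, (∀ a, 0 ≤ σ a) ∧ (∑ a, σ a) = 1 ∧
        x = ReachProb (fun s s' => ∑ a, σ a * δ s a s') top s₀} = 1 ↔
      ∃ r : A → Option ℕ, (∃ a, r a ≠ none) ∧
        Filter.Tendsto
          (fun ε : ℝ => ReachProb
            (fun s s' => ∑ a,
              (rankWeight r a ε / ∑ a', rankWeight r a' ε) * δ s a s') top s₀)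
          (nhdsWithin 0 (Set.Ioi 0)) (nhds 1) := by
  set Val : (A → ℝ) → ℝ :=
    fun σ => ReachProb (fun s s' => ∑ a, σ a * δ s a s') top s₀ with hVal
  set T : Set ℝ := {x : ℝ | ∃ σ : A → ℝ, (∀ a, 0 ≤ σ a) ∧ (∑ a, σ a) = 1 ∧ x = Val σ}
    with hT
  have hVal_le_one : ∀ σ : A → ℝ, (∀ a, 0 ≤ σ a) → (∑ a, σ a) = 1 → Val σ ≤ 1 := by
    intro σ h0 h1
    exact reachProb_le_one (policyMatrix_nonneg δ hδ h0)
      (fun s => le_of_eq (policyMatrix_row δ hδ h1 s)) s₀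
  have hbdd : BddAbove T := by
    refine ⟨1, ?_⟩
    rintro x ⟨σ, h0, h1, rfl⟩
    exact hVal_le_one σ h0 h1
  constructor
  · intro hsup
    classical
    by_cases hs₀t : s₀ = top
    · refine ⟨fun _ => some 0, ⟨Classical.arbitrary A, by simp⟩, ?_⟩
      have hone : ∀ P : S → S → ℝ, ReachProb P top s₀ = 1 := by
        intro P
        rw [hs₀t, ReachProb]
        have hn : ∀ n : ℕ, reachAux P top n top = 1 := reachAux_at_t
        simp only [hn]
        exact ciSup_const
      simp only [hone]
      exact tendsto_const_nhds
    · have hδ0 : ∀ s a s', 0 ≤ δ s a s' := fun s a => (hδ s a).1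
      have hδrow : ∀ s a, ∑ s', δ s a s' = 1 := fun s a => (hδ s a).2
      set sp : (A → ℝ) → Finset A :=
        fun σ => Finset.univ.filter (fun a => 0 < σ a) with hsp
      have hTne : T.Nonempty := by
        refine ⟨Val (fun _ => (Fintype.card A : ℝ)⁻¹), fun _ => (Fintype.card A : ℝ)⁻¹,
          fun a => by positivity, ?_, rfl⟩
        rw [Finset.sum_const, Finset.card_univ, nsmul_eq_mul]
        rw [mul_inv_cancel₀]
        exact_mod_cast Fintype.card_ne_zero
      have hvals : ∀ η : ℝ, 0 < η → ∃ σ : A → ℝ,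
          (∀ a, 0 ≤ σ a) ∧ (∑ a, σ a) = 1 ∧ 1 - η < Val σ := by
        intro η hη
        have hlt : 1 - η < sSup T := by rw [hsup]; linarith
        obtain ⟨x, hxT, hxgt⟩ := exists_lt_of_lt_csSup hTne hlt
        obtain ⟨σ, h0, h1, rfl⟩ := hxT
        exact ⟨σ, h0, h1, hxgt⟩
      have hpigeon : ∃ B : Finset A, ∀ η : ℝ, 0 < η → ∃ σ : A → ℝ,
          (∀ a, 0 ≤ σ a) ∧ (∑ a, σ a) = 1 ∧ sp σ = B ∧ 1 - η < Val σ := by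
        by_contra hno
        push_neg at hno
        choose ηf hηf hbound using hno
        have hne' : (Finset.univ : Finset (Finset A)).Nonempty :=
          ⟨∅, Finset.mem_univ ∅⟩
        set η₀ := Finset.univ.inf' hne' ηf with hη₀def
        have hη₀ : 0 < η₀ := by
          rw [hη₀def, Finset.lt_inf'_iff]
          intro b _
          exact hηf b
        obtain ⟨σ, h0, h1, hgt⟩ := hvals η₀ hη₀
        have hb1 := hbound (sp σ) σ h0 h1 rfl
        have hb2 : η₀ ≤ ηf (sp σ) := Finset.inf'_le _ (Finset.mem_univ _)
        linarith
      obtain ⟨B, hB⟩ := hpigeon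
      have hsupfact : ∀ σ : A → ℝ, (∀ a, 0 ≤ σ a) → sp σ = B →
          ((∀ a, a ∉ B → σ a = 0) ∧ (∀ a ∈ B, 0 < σ a)) := by
        intro σ h0 hs
        constructor
        · intro a ha
          by_contra hne
          have hpos : 0 < σ a := lt_of_le_of_ne (h0 a) (Ne.symm hne)
          have : a ∈ sp σ := by
            rw [hsp]
            exact Finset.mem_filter.mpr ⟨Finset.mem_univ a, hpos⟩
          rw [hs] at this
          exact ha this
        · intro a ha
          rw [← hs, hsp] at ha
          exact (Finset.mem_filter.mp ha).2
      obtain ⟨σ₁, h10, h11, h1s, h1v⟩ := hB (1/2) (by norm_num)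
      have hBne : ∃ b₀, b₀ ∈ B := by
        by_contra hempty
        push_neg at hempty
        have hzero : ∀ a, σ₁ a = 0 :=
          fun a => (hsupfact σ₁ h10 h1s).1 a (hempty a)
        rw [Finset.sum_congr rfl (fun a _ => hzero a)] at h11
        simp at h11
      obtain ⟨b₀, hb₀⟩ := hBne
      have hValPmat : ∀ σ : A → ℝ, Val σ = ReachProb (Pmat δ σ) top s₀ :=
        fun σ => rfl
      have hs₀X : s₀ ∈ Xset δ top B := by
        rw [mem_Xset_iff]
        refine ⟨hs₀t, ?_⟩
        by_contra hcr
        have hz : Val σ₁ = 0 := by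
          rw [hValPmat, ReachProb]
          have hzn : ∀ n : ℕ, reachAux (Pmat δ σ₁) top n s₀ = 0 := fun n =>
            reachAux_zero_of_doomed hδ0 h10 (hsupfact σ₁ h10 h1s).1 n s₀ hcr
          simp only [hzn]
          exact ciSup_const
        rw [hz] at h1v
        norm_num at h1v
      obtain ⟨i₀, hi₀A, hi₀good⟩ := exists_good_forest (δ := δ) (t := top) (B := B)
      have hi₀SG : i₀ ∈ SGset δ top B := by
        refine mem_SGset.mpr ⟨hi₀A, ?_, fun x hx => (hi₀good x hx).1⟩
        rw [cdel]
        exact Finset.prod_pos fun x hx => (hi₀good x hx).2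
      have hSGne : (SGset δ top B).Nonempty := ⟨i₀, hi₀SG⟩
      by_cases hSH : (SHset δ top B s₀).Nonempty
      · set cmin := (SHset δ top B s₀).inf' hSH (cdel δ top B) with hcmindef
        set cmax := (SGset δ top B).sup' hSGne (cdel δ top B) with hcmaxdef
        set Tc : ℝ := (SGset δ top B).card * cmax * Real.exp 1 with hTcdef
        have hcdel_pos : ∀ i ∈ SGset δ top B, 0 < cdel δ top B i :=
          fun i hi => (mem_SGset.mp hi).2.1
        have hcmin_pos : 0 < cmin := by
          rw [hcmindef, Finset.lt_inf'_iff]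
          intro i hi
          exact hcdel_pos i (mem_SHset.mp hi).1
        have hcmax_pos : 0 < cmax := by
          obtain ⟨j, hj⟩ := hSGne
          exact lt_of_lt_of_le (hcdel_pos j hj) (Finset.le_sup' _ hj)
        have hcard_pos : (0:ℝ) < (SGset δ top B).card := by
          exact_mod_cast Finset.card_pos.mpr hSGne
        have hTc_pos : 0 < Tc := by
          rw [hTcdef]; positivity
        set η := cmin / (2 * Tc) with hηdef
        have hη : 0 < η := by
          rw [hηdef]; positivity
        obtain ⟨σ, h0, h1, hsps, hv⟩ := hB η hη
        obtain ⟨hsupp, hfull⟩ := hsupfact σ h0 hsps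
        have hG : 0 < Gp δ top B σ := Gp_pos hδ0 h0 hfull
        have hrep : Val σ = 1 - HAt δ top B σ s₀ / Gp δ top B σ := by
          rw [hValPmat,
            reach_eq_ratio hδ0 hδrow h0 h1 hsupp hfull hG hs₀X,
            eq_sub_iff_add_eq, ← add_div, FtAt_add_HAt, div_self hG.ne']
        have hHsmall : HAt δ top B σ s₀ * Tc < cmin * Gp δ top B σ := by
          have h2 : HAt δ top B σ s₀ / Gp δ top B σ < η := by
            rw [hrep] at hv
            linarith
          have h3 : HAt δ top B σ s₀ < η * Gp δ top B σ :=
            (div_lt_iff₀ hG).mp h2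
          have h4 : η * Tc = cmin / 2 := by
            rw [hηdef]
            field_simp
          nlinarith
        obtain ⟨L, j₀, hj₀, hstrict⟩ :=
          exists_rank_of_small_H hδ0 h0 h1 hsupp hfull hSH hSGne hHsmall
        refine ⟨fun a => if a ∈ B then some (L a) else none,
          ⟨b₀, by simp [hb₀]⟩, ?_⟩
        exact tendsto_rank_curve hδ hs₀X hb₀ L hj₀ hstrict
      · rw [Finset.not_nonempty_iff_eq_empty] at hSH
        refine ⟨fun a => if a ∈ B then some ((fun _ : A => 0) a) else none,
          ⟨b₀, by simp [hb₀]⟩, ?_⟩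
        refine tendsto_rank_curve hδ hs₀X hb₀ (fun _ => 0) hi₀SG ?_
        rw [hSH]
        simp
  · rintro ⟨r, ⟨a₀, ha₀⟩, htend⟩
    refine le_antisymm ?_ ?_
    · refine Real.sSup_le ?_ one_pos.le
      rintro x ⟨σ, h0, h1, rfl⟩
      exact hVal_le_one σ h0 h1
    · by_contra hlt
      push_neg at hlt
      have hev : ∀ᶠ ε in nhdsWithin (0:ℝ) (Set.Ioi 0),
          sSup T < Val (fun a => rankWeight r a ε / ∑ a', rankWeight r a' ε) := by
        have := htend (Ioi_mem_nhds hlt)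
        exact this
      have hε : ∃ ε : ℝ, ε ∈ Set.Ioi (0:ℝ) ∧
          sSup T < Val (fun a => rankWeight r a ε / ∑ a', rankWeight r a' ε) := by
        rcases (hev.and self_mem_nhdsWithin).exists with ⟨ε, h1, h2⟩
        exact ⟨ε, h2, h1⟩
      rcases hε with ⟨ε, hεpos, hgt⟩
      have hmem : Val (fun a => rankWeight r a ε / ∑ a', rankWeight r a' ε) ∈ T := by
        rcases rankPolicy_valid r ha₀ hεpos with ⟨hv0, hv1⟩
        exact ⟨_, hv0, hv1, rfl⟩
      exact absurd (le_csSup hbdd hmem) (not_le.mpr hgt)
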